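/- arXiv:0912.0052 — 13 statements merged into one kernel-verified Lean document; each statement's English description precedes it below -/
import Mathlib

section
/- If n is a practical number, p is a prime with gcd(n, p) = 1, l is a positive integer, and σ(n) is even, then n·p^l is a Zumkeller number. -/
/-- A positive integer `n` is a Zumkeller number if the set of its positive divisors
can be partitioned into two disjoint parts whose sums are equal. -/
def Zumkeller (n : ℕ) : Prop :=
  0 < n ∧ ∃ A ⊆ n.divisors, ∑ d ∈ A, d = ∑ d ∈ n.divisors \ A, d

/-- A positive integer `n` is a half-Zumkeller number if the set of its positive proper
divisors can be partitioned into two disjoint parts whose sums are equal. -/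
def HalfZumkeller (n : ℕ) : Prop :=
  0 < n ∧ ∃ A ⊆ n.properDivisors, ∑ d ∈ A, d = ∑ d ∈ n.properDivisors \ A, d

/-- A positive integer `n` is a practical number if every positive integer less than `n`
can be written as a sum of distinct positive divisors of `n`. -/
def Practical (n : ℕ) : Prop :=
  0 < n ∧ ∀ m : ℕ, 0 < m → m < n → ∃ S ⊆ n.divisors, m = ∑ d ∈ S, d

/-- A positive integer `n` is a quasi-practical number if every positive integer
`m ≤ σ(n) - n` can be written as a sum of distinct positive divisors of `n`
excluding `n` itself. -/
def QuasiPractical (n : ℕ) : Prop :=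
  0 < n ∧ ∀ m : ℕ, 0 < m → m ≤ (∑ d ∈ n.divisors, d) - n →
    ∃ S ⊆ n.properDivisors, m = ∑ d ∈ S, d

lemma complete_subset_sum : ∀ (S : Finset ℕ),
    (∀ x ∈ S, x ≤ 1 + ∑ y ∈ S.filter (· < x), y) →
    ∀ m ≤ ∑ y ∈ S, y, ∃ T ⊆ S, ∑ y ∈ T, y = m := by
  intro S
  induction S using Finset.strongInduction with
  | _ S ih =>
    intro h m hm
    rcases S.eq_empty_or_nonempty with rfl | hne
    · refine ⟨∅, Finset.Subset.refl _, ?_⟩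
      simp only [Finset.sum_empty] at hm ⊢
      omega
    · set x := S.max' hne with hx
      have hxS : x ∈ S := S.max'_mem hne
      set S' := S.erase x with hS'
      have hsub : S' ⊂ S := Finset.erase_ssubset hxS
      have hfx : S.filter (· < x) = S' := by
        ext y
        simp only [Finset.mem_filter, hS', Finset.mem_erase]
        constructor
        · rintro ⟨hy, hlt⟩
          exact ⟨ne_of_lt hlt, hy⟩
        · rintro ⟨hne', hy⟩
          exact ⟨hy, lt_of_le_of_ne (S.le_max' y hy) hne'⟩
      have hcond' : ∀ y ∈ S', y ≤ 1 + ∑ z ∈ S'.filter (· < y), z := by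
        intro y hy
        have heq : S'.filter (· < y) = S.filter (· < y) := by
          ext z
          simp only [Finset.mem_filter, hS', Finset.mem_erase]
          constructor
          · rintro ⟨⟨_, hz⟩, hlt⟩
            exact ⟨hz, hlt⟩
          · rintro ⟨hz, hlt⟩
            have hyx : y ≤ x := S.le_max' y (Finset.mem_of_mem_erase hy)
            exact ⟨⟨by omega, hz⟩, hlt⟩
        rw [heq]
        exact h y (Finset.mem_of_mem_erase hy)
      have hsumS : x + ∑ y ∈ S', y = ∑ y ∈ S, y :=
        Finset.add_sum_erase S (fun y => y) hxS
      by_cases hm' : m ≤ ∑ y ∈ S', y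
      · obtain ⟨T, hT, hTs⟩ := ih S' hsub hcond' m hm'
        exact ⟨T, hT.trans (Finset.erase_subset _ _), hTs⟩
      · have hxle : x ≤ 1 + ∑ y ∈ S', y := by
          have := h x hxS
          rwa [hfx] at this
        obtain ⟨T, hT, hTs⟩ := ih S' hsub hcond' (m - x) (by omega)
        refine ⟨insert x T, ?_, ?_⟩
        · exact Finset.insert_subset hxS (hT.trans (Finset.erase_subset _ _))
        · rw [Finset.sum_insert (fun hxT => (Finset.mem_erase.mp (hT hxT)).1 rfl)]
          omega

lemma practical_rep {n : ℕ} (hn : Practical n) :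
    ∀ m ≤ ∑ d ∈ n.divisors, d, ∃ A ⊆ n.divisors, ∑ d ∈ A, d = m := by
  obtain ⟨hn0, hpr⟩ := hn
  apply complete_subset_sum
  intro x hx
  obtain ⟨hdvd, hn0'⟩ := Nat.mem_divisors.mp hx
  have hx1 : 1 ≤ x := Nat.pos_of_mem_divisors hx
  rcases eq_or_lt_of_le hx1 with h1 | h2
  · omega
  · have hxn : x ≤ n := Nat.le_of_dvd hn0 hdvd
    obtain ⟨S, hS, hSsum⟩ := hpr (x - 1) (by omega) (by omega)
    have hSsub : S ⊆ n.divisors.filter (· < x) := by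
      intro d hd
      rw [Finset.mem_filter]
      refine ⟨hS hd, ?_⟩
      have : d ≤ ∑ e ∈ S, e :=
        Finset.single_le_sum (f := fun e => e) (fun i _ => Nat.zero_le i) hd
      omega
    have : ∑ d ∈ S, d ≤ ∑ d ∈ n.divisors.filter (· < x), d :=
      Finset.sum_le_sum_of_subset hSsub
    omega

theorem stmt0 (n p l : ℕ) (hn : Practical n) (hp : p.Prime) (hcop : Nat.gcd n p = 1)
    (hl : 0 < l) (hsigma : Even (∑ d ∈ n.divisors, d)) :
    Zumkeller (n * p ^ l) := by
  have hn0 : 0 < n := hn.1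
  have hp0 : 0 < p := hp.pos
  have hcop' : Nat.Coprime n (p ^ l) :=
    (Nat.coprime_iff_gcd_eq_one.mpr hcop).pow_right l
  obtain ⟨k, hk⟩ := hsigma
  obtain ⟨A, hA, hAs⟩ := practical_rep hn k (by omega)
  set N := n * p ^ l with hN
  have hpl0 : 0 < p ^ l := pow_pos hp0 l
  have hN0 : 0 < N := Nat.mul_pos hn0 hpl0
  set D := (p ^ l).divisors with hD
  -- multiplicativity of sigma
  have hσ : ∑ d ∈ N.divisors, d = (∑ d ∈ n.divisors, d) * (∑ d ∈ D, d) := by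
    exact Nat.Coprime.sum_divisors_mul hcop'
  set B := Finset.image (fun q : ℕ × ℕ => q.1 * q.2) (A ×ˢ D) with hB
  have hmemd : ∀ q : ℕ × ℕ, q ∈ A ×ˢ D → q.1 ∣ n ∧ q.2 ∣ p ^ l := by
    rintro ⟨a, b⟩ hq
    rw [Finset.mem_product] at hq
    exact ⟨(Nat.mem_divisors.mp (hA hq.1)).1, (Nat.mem_divisors.mp hq.2).1⟩
  have hinj : ∀ q₁ ∈ A ×ˢ D, ∀ q₂ ∈ A ×ˢ D,
      q₁.1 * q₁.2 = q₂.1 * q₂.2 → q₁ = q₂ := by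
    rintro ⟨a₁, b₁⟩ h₁ ⟨a₂, b₂⟩ h₂ heq
    obtain ⟨ha₁, hb₁⟩ := hmemd _ h₁
    obtain ⟨ha₂, hb₂⟩ := hmemd _ h₂
    simp only at heq
    have hc₁ : Nat.Coprime a₁ b₂ :=
      Nat.Coprime.coprime_dvd_right hb₂ (Nat.Coprime.coprime_dvd_left ha₁ hcop')
    have hc₂ : Nat.Coprime a₂ b₁ :=
      Nat.Coprime.coprime_dvd_right hb₁ (Nat.Coprime.coprime_dvd_left ha₂ hcop')
    have hd₁ : a₁ ∣ a₂ := hc₁.dvd_of_dvd_mul_right ⟨b₁, heq.symm⟩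
    have hd₂ : a₂ ∣ a₁ := hc₂.dvd_of_dvd_mul_right ⟨b₂, heq⟩
    have haeq : a₁ = a₂ := Nat.dvd_antisymm hd₁ hd₂
    have ha1pos : 0 < a₁ := Nat.pos_of_dvd_of_pos ha₁ hn0
    have hbeq : b₁ = b₂ := by
      subst haeq
      exact Nat.eq_of_mul_eq_mul_left ha1pos heq
    simp [haeq, hbeq]
  have hBsub : B ⊆ N.divisors := by
    intro d hd
    rw [hB, Finset.mem_image] at hd
    obtain ⟨⟨a, b⟩, hq, rfl⟩ := hd
    obtain ⟨ha, hb⟩ := hmemd _ hq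
    exact Nat.mem_divisors.mpr ⟨mul_dvd_mul ha hb, hN0.ne'⟩
  have hBsum : ∑ d ∈ B, d = k * (∑ d ∈ D, d) := by
    rw [hB, Finset.sum_image hinj, Finset.sum_product, ← hAs, Finset.sum_mul]
    exact Finset.sum_congr rfl (fun a _ => by rw [Finset.mul_sum])
  refine ⟨hN0, B, hBsub, ?_⟩
  have hsdiff : ∑ d ∈ N.divisors \ B, d + ∑ d ∈ B, d = ∑ d ∈ N.divisors, d :=
    Finset.sum_sdiff hBsub
  have htot : ∑ d ∈ N.divisors, d = 2 * (k * (∑ d ∈ D, d)) := by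
    rw [hσ]
    have : ∑ d ∈ n.divisors, d = 2 * k := by omega
    rw [this]
    ring
  omega
end

section
/- If n is a practical number, p is a prime with gcd(n, p) = 1, l is a positive integer, and σ(n) is odd, then n·p^l is a Zumkeller number if and only if p ≤ σ(n) and l is odd. -/
lemma complete_subsum (D : Finset ℕ)
    (hD : ∀ d ∈ D, d ≤ 1 + ∑ e ∈ D.filter (· < d), e) :
    ∀ m ≤ ∑ d ∈ D, d, ∃ S ⊆ D, m = ∑ d ∈ S, d := by
  induction D using Finset.strongInduction with
  | _ D ih =>
    intro m hm
    rcases D.eq_empty_or_nonempty with rfl | hne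
    · simp only [Finset.sum_empty, Nat.le_zero] at hm
      exact ⟨∅, Finset.Subset.refl _, by simp [hm]⟩
    · set d := D.max' hne with hd
      have hdmem : d ∈ D := D.max'_mem hne
      set D' := D.erase d with hD'
      have hss : D' ⊂ D := Finset.erase_ssubset hdmem
      have hfilt : ∀ e ∈ D', D'.filter (· < e) = D.filter (· < e) := by
        intro e he
        ext f
        simp only [Finset.mem_filter, hD', Finset.mem_erase]
        constructor
        · rintro ⟨⟨_, hf⟩, hfe⟩; exact ⟨hf, hfe⟩
        · rintro ⟨hf, hfe⟩
          have he' : e ≤ d := D.le_max' e (Finset.mem_of_mem_erase he)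
          exact ⟨⟨by omega, hf⟩, hfe⟩
      have hD'cond : ∀ e ∈ D', e ≤ 1 + ∑ f ∈ D'.filter (· < e), f := by
        intro e he
        rw [hfilt e he]
        exact hD e (Finset.mem_of_mem_erase he)
      have hsplit : ∑ e ∈ D', e + d = ∑ e ∈ D, e := Finset.sum_erase_add D _ hdmem
      rcases le_or_gt m (∑ e ∈ D', e) with hle | hgt
      · obtain ⟨S, hS, hSsum⟩ := ih D' hss hD'cond m hle
        exact ⟨S, hS.trans (Finset.erase_subset _ _), hSsum⟩
      · have hfsub : D.filter (· < d) ⊆ D' := by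
          intro f hf
          simp only [Finset.mem_filter] at hf
          exact Finset.mem_erase.mpr ⟨by omega, hf.1⟩
        have hmono : ∑ e ∈ D.filter (· < d), e ≤ ∑ e ∈ D', e :=
          Finset.sum_le_sum_of_subset hfsub
        have hdle : d ≤ 1 + ∑ e ∈ D', e := le_trans (hD d hdmem) (by omega)
        have hdm : d ≤ m := by omega
        obtain ⟨S, hS, hSsum⟩ := ih D' hss hD'cond (m - d) (by omega)
        refine ⟨insert d S, ?_, ?_⟩
        · exact Finset.insert_subset hdmem (hS.trans (Finset.erase_subset _ _))
        · have hdS : d ∉ S := fun h => (Finset.mem_erase.mp (hS h)).1 rfl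
          rw [Finset.sum_insert hdS, ← hSsum]
          omega

lemma practical_subsum {n : ℕ} (hn : Practical n) :
    ∀ m ≤ ∑ d ∈ n.divisors, d, ∃ S ⊆ n.divisors, m = ∑ d ∈ S, d := by
  apply complete_subsum
  intro d hd
  have hd1 : 1 ≤ d := Nat.pos_of_mem_divisors hd
  rcases eq_or_lt_of_le hd1 with h1 | h2
  · omega
  · have hdn : d ≤ n := Nat.le_of_dvd hn.1 (Nat.dvd_of_mem_divisors hd)
    obtain ⟨S, hS, hSsum⟩ := hn.2 (d - 1) (by omega) (by omega)
    have hSlt : ∀ s ∈ S, s < d := by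
      intro s hs
      have h : s ≤ ∑ x ∈ S, x :=
        Finset.single_le_sum (f := fun x => x) (fun i _ => Nat.zero_le i) hs
      omega
    have hsub : S ⊆ (n.divisors).filter (· < d) := by
      intro s hs
      exact Finset.mem_filter.mpr ⟨hS hs, hSlt s hs⟩
    have hmono : ∑ s ∈ S, s ≤ ∑ s ∈ (n.divisors).filter (· < d), s :=
      Finset.sum_le_sum_of_subset hsub
    omega

lemma val_mul_pow {p d : ℕ} (hp : p.Prime) (hd : d ≠ 0) (hpd : ¬ p ∣ d) (i : ℕ) :
    (d * p ^ i).factorization p = i := by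
  rw [Nat.factorization_mul hd (pow_ne_zero i hp.pos.ne'), Finsupp.add_apply,
    hp.factorization_pow, Finsupp.single_eq_same,
    Nat.factorization_eq_zero_of_not_dvd hpd, zero_add]

lemma pair_geom (p k : ℕ) :
    ∑ i ∈ Finset.range (2 * k + 2), p ^ i
      = ∑ j ∈ Finset.range (k + 1), (p ^ (2 * j) + p ^ (2 * j + 1)) := by
  induction k with
  | zero => simp [add_comm]
  | succ k ih =>
    rw [Finset.sum_range_succ (fun j => p ^ (2 * j) + p ^ (2 * j + 1)), ← ih,
      show 2 * (k + 1) + 2 = (2 * k + 2) + 1 + 1 from by ring,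
      Finset.sum_range_succ, Finset.sum_range_succ]
    have e1 : 2 * k + 2 = 2 * (k + 1) := by ring
    have e2 : 2 * k + 2 + 1 = 2 * (k + 1) + 1 := by ring
    rw [e1, e2]
    ring

lemma sum_pow_mod_two (p : ℕ) (hodd : Odd p) (m : ℕ) :
    (∑ i ∈ Finset.range m, p ^ i) % 2 = m % 2 := by
  induction m with
  | zero => simp
  | succ m ih =>
    have h1 : p ^ m % 2 = 1 := Nat.odd_iff.mp (hodd.pow)
    rw [Finset.sum_range_succ, Nat.add_mod, ih, h1]
    omega

theorem stmt1 (n p l : ℕ) (hn : Practical n) (hp : p.Prime) (hcop : Nat.gcd n p = 1)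
    (hl : 0 < l) (hsigma : Odd (∑ d ∈ n.divisors, d)) :
    Zumkeller (n * p ^ l) ↔ p ≤ (∑ d ∈ n.divisors, d) ∧ Odd l := by
  have hcop' : Nat.Coprime n p := hcop
  have hn1 : 0 < n := hn.1
  have hpn : ¬ p ∣ n := fun h => hp.ne_one (Nat.Coprime.eq_one_of_dvd hcop'.symm h)
  have hN0 : n * p ^ l ≠ 0 := (Nat.mul_pos hn1 (pow_pos hp.pos l)).ne'
  have hσN : ∑ d ∈ (n * p ^ l).divisors, d
      = (∑ d ∈ n.divisors, d) * ∑ i ∈ Finset.range (l + 1), p ^ i := by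
    rw [Nat.Coprime.sum_divisors_mul (hcop'.pow_right l), Nat.sum_divisors_prime_pow hp]
  have hsub : n.divisors ⊆ (n * p ^ l).divisors :=
    Nat.divisors_subset_of_dvd hN0 (dvd_mul_right n (p ^ l))
  constructor
  · rintro ⟨hNpos, A, hA, hAsum⟩
    have h2 : (∑ d ∈ n.divisors, d) * ∑ i ∈ Finset.range (l + 1), p ^ i
        = 2 * ∑ d ∈ A, d := by
      rw [← hσN, ← Finset.sum_sdiff hA, ← hAsum]; ring
    have hXmod : (∑ i ∈ Finset.range (l + 1), p ^ i) % 2 = 0 := by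
      have h3 : ((∑ d ∈ n.divisors, d) % 2)
          * ((∑ i ∈ Finset.range (l + 1), p ^ i) % 2) % 2 = 0 := by
        rw [← Nat.mul_mod, h2]; omega
      have h4 := Nat.odd_iff.mp hsigma
      rw [h4, one_mul] at h3
      omega
    have hpodd : Odd p := by
      rcases hp.eq_two_or_odd' with rfl | h
      · exfalso
        have hgeo : ∑ i ∈ Finset.range (l + 1), 2 ^ i
            = (∑ i ∈ Finset.range l, 2 ^ i) * 2 + 1 := by
          rw [Finset.sum_range_succ']
          simp only [pow_succ, pow_zero]
          rw [← Finset.sum_mul]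
        omega
      · exact h
    have hlodd : Odd l := by
      have := sum_pow_mod_two p hpodd (l + 1)
      rw [Nat.odd_iff]
      omega
    refine ⟨?_, hlodd⟩
    by_contra hgt
    push_neg at hgt
    set a := ∑ x ∈ n.divisors ∩ A, x with ha
    set b := ∑ x ∈ n.divisors \ A, x with hb
    have hab : a + b = ∑ d ∈ n.divisors, d := Finset.sum_inter_add_sum_sdiff _ _ _
    have hpdvd : ∀ X : Finset ℕ, X ⊆ (n * p ^ l).divisors → p ∣ ∑ x ∈ X \ n.divisors, x := by
      intro X hX
      refine Finset.dvd_sum fun x hx => ?_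
      rcases Finset.mem_sdiff.mp hx with ⟨hx1, hx2⟩
      by_contra hpx
      have hco : Nat.Coprime p x := (Nat.Prime.coprime_iff_not_dvd hp).mpr hpx
      have hxd : x ∣ n * p ^ l := Nat.dvd_of_mem_divisors (hX hx1)
      have hxn : x ∣ n := (Nat.Coprime.pow_right l hco.symm).dvd_of_dvd_mul_right hxd
      exact hx2 (Nat.mem_divisors.mpr ⟨hxn, hn1.ne'⟩)
    obtain ⟨c, hc⟩ := hpdvd A hA
    obtain ⟨c', hc'⟩ := hpdvd _ (Finset.sdiff_subset (s := (n * p ^ l).divisors) (t := A))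
    have hA0 : ∑ x ∈ A ∩ n.divisors, x + ∑ x ∈ A \ n.divisors, x = ∑ x ∈ A, x :=
      Finset.sum_inter_add_sum_sdiff _ _ _
    have hcomm : A ∩ n.divisors = n.divisors ∩ A := Finset.inter_comm _ _
    have hAeq : ∑ d ∈ A, d = a + p * c := by
      rw [← hA0, hcomm, ← ha, hc]
    have hBint : ((n * p ^ l).divisors \ A) ∩ n.divisors = n.divisors \ A := by
      ext x
      simp only [Finset.mem_inter, Finset.mem_sdiff]
      exact ⟨fun ⟨⟨_, h2'⟩, h3⟩ => ⟨h3, h2'⟩, fun ⟨h1', h2'⟩ => ⟨⟨hsub h1', h2'⟩, h1'⟩⟩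
    have hB0 : ∑ x ∈ ((n * p ^ l).divisors \ A) ∩ n.divisors, x
        + ∑ x ∈ ((n * p ^ l).divisors \ A) \ n.divisors, x
        = ∑ x ∈ (n * p ^ l).divisors \ A, x :=
      Finset.sum_inter_add_sum_sdiff _ _ _
    have hBeq : ∑ d ∈ (n * p ^ l).divisors \ A, d = b + p * c' := by
      rw [← hB0, hBint, ← hb, hc']
    have hkey : a + p * c = b + p * c' := by rw [← hAeq, ← hBeq, hAsum]
    have h1m : a ≡ a + p * c [MOD p] :=
      (Nat.modEq_iff_dvd' (Nat.le_add_right _ _)).mpr ⟨c, by omega⟩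
    have h2m : b ≡ b + p * c' [MOD p] :=
      (Nat.modEq_iff_dvd' (Nat.le_add_right _ _)).mpr ⟨c', by omega⟩
    have h3m : a ≡ b [MOD p] := h1m.trans (by rw [hkey]; exact h2m.symm)
    have hap : a < p := by omega
    have hbp : b < p := by omega
    have : a = b := by
      have := h3m
      unfold Nat.ModEq at this
      rwa [Nat.mod_eq_of_lt hap, Nat.mod_eq_of_lt hbp] at this
    have h4 := Nat.odd_iff.mp hsigma
    omega
  · rintro ⟨hple, hlodd⟩
    have hpodd : Odd p := by
      rcases hp.eq_two_or_odd' with rfl | h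
      · exfalso
        have hmod : n % 2 = 1 := by
          rcases Nat.mod_two_eq_zero_or_one n with h | h
          · exact absurd (Nat.dvd_of_mod_eq_zero h) hpn
          · exact h
        have hne1 : n ≠ 1 := by
          rintro rfl
          norm_num [Nat.divisors_one] at hple
        have hn3 : 3 ≤ n := by omega
        obtain ⟨S, hS, hSsum⟩ := hn.2 2 (by norm_num) (by omega)
        have hodd : ∀ s ∈ S, s % 2 = 1 ∧ 1 ≤ s := by
          intro s hs
          have hdv := Nat.dvd_of_mem_divisors (hS hs)
          have hpos := Nat.pos_of_mem_divisors (hS hs)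
          refine ⟨?_, hpos⟩
          rcases Nat.mod_two_eq_zero_or_one s with h | h
          · exact absurd ((Nat.dvd_of_mod_eq_zero h).trans hdv) hpn
          · exact h
        by_cases h1 : 1 ∈ S
        · have he0 : (1 : ℕ) + ∑ x ∈ S.erase 1, x = ∑ x ∈ S, x :=
            Finset.add_sum_erase S (fun x => x) h1
          rcases (S.erase 1).eq_empty_or_nonempty with he2 | ⟨x, hx⟩
          · rw [he2, Finset.sum_empty] at he0
            omega
          · have hxS := Finset.mem_of_mem_erase hx
            have hxne : x ≠ 1 := (Finset.mem_erase.mp hx).1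
            have hx3 : 3 ≤ x := by have := hodd x hxS; omega
            have hxle : x ≤ ∑ d ∈ S.erase 1, d :=
              Finset.single_le_sum (f := fun x => x) (fun i _ => Nat.zero_le i) hx
            omega
        · rcases S.eq_empty_or_nonempty with rfl | ⟨x, hx⟩
          · simp at hSsum
          · have hxne : x ≠ 1 := fun h => h1 (h ▸ hx)
            have hx3 : 3 ≤ x := by have := hodd x hx; omega
            have hxle : x ≤ ∑ d ∈ S, d :=
              Finset.single_le_sum (f := fun x => x) (fun i _ => Nat.zero_le i) hx
            omega
      · exact h
    obtain ⟨k, hk⟩ := hlodd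
    obtain ⟨t, ht⟩ := hsigma
    obtain ⟨u, hu⟩ := hpodd
    obtain ⟨S, hSsub, hSsum⟩ := practical_subsum hn (t + u + 1) (by omega)
    obtain ⟨T, hTsub, hTsum⟩ := practical_subsum hn t (by omega)
    refine ⟨Nat.pos_of_ne_zero hN0, ?_⟩
    set A : Finset ℕ := (Finset.range (k + 1)).biUnion
      (fun j => S.image (fun d => d * p ^ (2 * j)) ∪ T.image (fun d => d * p ^ (2 * j + 1)))
      with hAdef
    have hfact : ∀ (X : Finset ℕ), X ⊆ n.divisors → ∀ i : ℕ,
        ∀ x ∈ X.image (fun d => d * p ^ i), x.factorization p = i := by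
      intro X hX i x hx
      obtain ⟨d, hd, rfl⟩ := Finset.mem_image.mp hx
      have hd' := hX hd
      exact val_mul_pow hp (Nat.pos_of_mem_divisors hd').ne'
        (fun h => hpn (h.trans (Nat.dvd_of_mem_divisors hd'))) i
    have hAsub : A ⊆ (n * p ^ l).divisors := by
      intro x hx
      rw [hAdef] at hx
      obtain ⟨j, hj, hx⟩ := Finset.mem_biUnion.mp hx
      rw [Finset.mem_range] at hj
      rcases Finset.mem_union.mp hx with hx | hx
      · obtain ⟨d, hd, rfl⟩ := Finset.mem_image.mp hx
        exact Nat.mem_divisors.mpr ⟨mul_dvd_mul (Nat.dvd_of_mem_divisors (hSsub hd))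
          (pow_dvd_pow p (by omega)), hN0⟩
      · obtain ⟨d, hd, rfl⟩ := Finset.mem_image.mp hx
        exact Nat.mem_divisors.mpr ⟨mul_dvd_mul (Nat.dvd_of_mem_divisors (hTsub hd))
          (pow_dvd_pow p (by omega)), hN0⟩
    have hinj : ∀ (i : ℕ) (X : Finset ℕ), ∀ x ∈ X, ∀ y ∈ X, x * p ^ i = y * p ^ i → x = y :=
      fun i X x _ y _ h => Nat.eq_of_mul_eq_mul_right (pow_pos hp.pos i) h
    have hpd : (↑(Finset.range (k + 1)) : Set ℕ).PairwiseDisjoint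
        (fun j => S.image (fun d => d * p ^ (2 * j)) ∪ T.image (fun d => d * p ^ (2 * j + 1))) := by
      intro j1 hj1 j2 hj2 hne
      rw [Function.onFun, Finset.disjoint_left]
      intro x hx hy
      have hvx : x.factorization p = 2 * j1 ∨ x.factorization p = 2 * j1 + 1 := by
        rcases Finset.mem_union.mp hx with h | h
        · exact Or.inl (hfact S hSsub _ x h)
        · exact Or.inr (hfact T hTsub _ x h)
      have hvy : x.factorization p = 2 * j2 ∨ x.factorization p = 2 * j2 + 1 := by
        rcases Finset.mem_union.mp hy with h | h
        · exact Or.inl (hfact S hSsub _ x h)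
        · exact Or.inr (hfact T hTsub _ x h)
      omega
    have hsumA : ∑ x ∈ A, x
        = ∑ j ∈ Finset.range (k + 1), ((t + u + 1) * p ^ (2 * j) + t * p ^ (2 * j + 1)) := by
      rw [hAdef, Finset.sum_biUnion hpd]
      refine Finset.sum_congr rfl fun j hj => ?_
      rw [Finset.sum_union (by
        rw [Finset.disjoint_left]
        intro x hx hy
        have h1' := hfact S hSsub (2 * j) x hx
        have h2' := hfact T hTsub (2 * j + 1) x hy
        omega)]
      rw [Finset.sum_image (hinj _ S), Finset.sum_image (hinj _ T),
        ← Finset.sum_mul, ← Finset.sum_mul, ← hSsum, ← hTsum]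
    have hNsum : ∑ d ∈ (n * p ^ l).divisors, d = 2 * ∑ x ∈ A, x := by
      rw [hσN, hsumA, show l + 1 = 2 * k + 2 from by omega, pair_geom,
        Finset.mul_sum, Finset.mul_sum]
      refine Finset.sum_congr rfl fun j hj => ?_
      rw [ht, hu]
      ring
    refine ⟨A, hAsub, ?_⟩
    have hsd : ∑ x ∈ (n * p ^ l).divisors \ A, x + ∑ x ∈ A, x
        = ∑ x ∈ (n * p ^ l).divisors, x := Finset.sum_sdiff hAsub
    omega
end

section
/- If n is a practical number, p is a prime with gcd(n, p) = 1, l is a positive integer, and σ(n) is even, then n·p^l is a half-Zumkeller number. -/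
open Finset

lemma complete_seq : ∀ (D : Finset ℕ),
    (∀ d ∈ D, d ≤ 1 + ∑ e ∈ D.filter (· < d), e) →
    ∀ m, m ≤ ∑ d ∈ D, d → ∃ S ⊆ D, m = ∑ d ∈ S, d := by
  intro D
  induction D using Finset.strongInduction with
  | _ D ih =>
    intro hD m hm
    rcases D.eq_empty_or_nonempty with rfl | hne
    · refine ⟨∅, Finset.Subset.refl _, ?_⟩
      simp at hm ⊢; omega
    · set d := D.max' hne with hd
      have hdD : d ∈ D := D.max'_mem hne
      set D' := D.erase d with hD'def
      have hssub : D' ⊂ D := Finset.erase_ssubset hdD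
      have hfilt : ∀ e ∈ D', D'.filter (· < e) = D.filter (· < e) := by
        intro e he
        have heD : e ∈ D := Finset.mem_of_mem_erase he
        ext x
        simp only [Finset.mem_filter, hD'def, Finset.mem_erase]
        constructor
        · rintro ⟨⟨_, hx⟩, hlt⟩; exact ⟨hx, hlt⟩
        · rintro ⟨hx, hlt⟩
          refine ⟨⟨?_, hx⟩, hlt⟩
          rintro rfl
          exact absurd (D.le_max' e heD) (by omega)
      have hD'cond : ∀ e ∈ D', e ≤ 1 + ∑ x ∈ D'.filter (· < e), x := by
        intro e he
        rw [hfilt e he]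
        exact hD e (Finset.mem_of_mem_erase he)
      have hsum : ∑ x ∈ D', x + d = ∑ x ∈ D, x := Finset.sum_erase_add D _ hdD
      by_cases hm' : m ≤ ∑ x ∈ D', x
      · obtain ⟨S, hS, hSm⟩ := ih D' hssub hD'cond m hm'
        exact ⟨S, hS.trans (Finset.erase_subset _ _), hSm⟩
      · push_neg at hm'
        have hdle : d ≤ 1 + ∑ x ∈ D', x := by
          refine (hD d hdD).trans ?_
          have : D.filter (· < d) ⊆ D' := by
            intro x hx
            simp only [Finset.mem_filter] at hx
            exact Finset.mem_erase.mpr ⟨by omega, hx.1⟩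
          exact Nat.add_le_add_left (Finset.sum_le_sum_of_subset this) 1
        obtain ⟨S, hS, hSm⟩ := ih D' hssub hD'cond (m - d) (by omega)
        have hdS : d ∉ S := fun h => (Finset.mem_erase.mp (hS h)).1 rfl
        refine ⟨insert d S, ?_, ?_⟩
        · intro x hx
          rcases Finset.mem_insert.mp hx with rfl | hx
          · exact hdD
          · exact Finset.mem_of_mem_erase (hS hx)
        · rw [Finset.sum_insert hdS]
          omega

lemma practical_rep_divisors {n : ℕ} (hn : Practical n) :
    ∀ m, m ≤ ∑ d ∈ n.divisors, d → ∃ S ⊆ n.divisors, m = ∑ d ∈ S, d := by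
  refine complete_seq _ (fun d hd => ?_)
  obtain ⟨hdvd, hn0⟩ := Nat.mem_divisors.mp hd
  have hd1 : 1 ≤ d := Nat.pos_of_dvd_of_pos hdvd hn.1
  rcases Nat.eq_or_lt_of_le hd1 with rfl | hd2
  · omega
  · obtain ⟨S, hS, hSm⟩ := hn.2 (d - 1) (by omega)
      (by have := Nat.le_of_dvd hn.1 hdvd; omega)
    have hsub : S ⊆ n.divisors.filter (· < d) := by
      intro x hx
      have hxle : x ≤ ∑ e ∈ S, e := Finset.single_le_sum (f := fun e => e) (fun _ _ => Nat.zero_le _) hx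
      exact Finset.mem_filter.mpr ⟨hS hx, by omega⟩
    have h5 : ∑ e ∈ S, e ≤ ∑ e ∈ n.divisors.filter (· < d), e :=
      Finset.sum_le_sum_of_subset hsub
    omega

lemma practical_rep_properDivisors {n : ℕ} (hn : Practical n) :
    ∀ m, m ≤ ∑ d ∈ n.properDivisors, d → ∃ S ⊆ n.properDivisors, m = ∑ d ∈ S, d := by
  refine complete_seq _ (fun d hd => ?_)
  obtain ⟨hdvd, hlt⟩ := Nat.mem_properDivisors.mp hd
  have hd1 : 1 ≤ d := Nat.pos_of_dvd_of_pos hdvd hn.1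
  rcases Nat.eq_or_lt_of_le hd1 with rfl | hd2
  · omega
  · obtain ⟨S, hS, hSm⟩ := hn.2 (d - 1) (by omega) (by omega)
    have hsub : S ⊆ n.properDivisors.filter (· < d) := by
      intro x hx
      have hxle : x ≤ ∑ e ∈ S, e := Finset.single_le_sum (f := fun e => e) (fun _ _ => Nat.zero_le _) hx
      have hxd : x ∣ n := (Nat.mem_divisors.mp (hS hx)).1
      exact Finset.mem_filter.mpr ⟨Nat.mem_properDivisors.mpr ⟨hxd, by omega⟩, by omega⟩
    have h5 : ∑ e ∈ S, e ≤ ∑ e ∈ n.properDivisors.filter (· < d), e :=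
      Finset.sum_le_sum_of_subset hsub
    omega

lemma practical_even {n : ℕ} (hn : Practical n) (h2 : 2 ≤ n) : 2 ∣ n := by
  by_contra hodd
  have h3 : 2 < n := by
    rcases Nat.eq_or_lt_of_le h2 with rfl | h
    · exact absurd ⟨1, rfl⟩ hodd
    · exact h
  obtain ⟨S, hS, hSm⟩ := hn.2 2 (by omega) h3
  have hsub : S ⊆ {1} := by
    intro x hx
    have hxd : x ∣ n := (Nat.mem_divisors.mp (hS hx)).1
    have hx1 : 1 ≤ x := Nat.pos_of_dvd_of_pos hxd hn.1
    have hxle : x ≤ ∑ d ∈ S, d := Finset.single_le_sum (f := fun e => e) (fun _ _ => Nat.zero_le _) hx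
    have : x ≠ 2 := fun h => hodd (h ▸ hxd)
    simp only [Finset.mem_singleton]; omega
  have h5 : ∑ e ∈ S, e ≤ ∑ e ∈ ({1} : Finset ℕ), e :=
    Finset.sum_le_sum_of_subset hsub
  simp at h5
  omega

lemma pow_mul_inj {n p : ℕ} (hp : p.Prime) (hcop : Nat.gcd n p = 1)
    {d d' i j : ℕ} (hd : d ∣ n) (hd' : d' ∣ n) (hij : i ≤ j)
    (h : d * p ^ i = d' * p ^ j) : d = d' ∧ i = j := by
  have hcd : Nat.Coprime d p := Nat.Coprime.coprime_dvd_left hd hcop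
  have hpow : d = d' * p ^ (j - i) := by
    have hpi : 0 < p ^ i := Nat.pow_pos hp.pos
    have : d * p ^ i = d' * p ^ (j - i) * p ^ i := by
      rw [mul_assoc, ← pow_add]
      have hji : j - i + i = j := by omega
      rw [hji, h]
    exact Nat.eq_of_mul_eq_mul_right hpi this
  have hdvd : p ^ (j - i) ∣ d := by rw [hpow]; exact dvd_mul_left _ _
  have hcop2 : Nat.Coprime d (p ^ (j - i)) := hcd.pow_right _
  have h1 : p ^ (j - i) = 1 := Nat.eq_one_of_dvd_coprimes hcop2 hdvd (dvd_refl _)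
  have hji : j - i = 0 := by
    rcases Nat.eq_zero_or_pos (j - i) with h0 | h0
    · exact h0
    · exfalso
      have h2p : p ≤ p ^ (j - i) := Nat.le_self_pow (by omega) p
      have := hp.two_le
      omega
  constructor
  · rw [hpow, hji, pow_zero, mul_one]
  · omega

theorem stmt4 (n p l : ℕ) (hn : Practical n) (hp : p.Prime) (hcop : Nat.gcd n p = 1)
    (hl : 0 < l) (hsigma : Even (∑ d ∈ n.divisors, d)) :
    HalfZumkeller (n * p ^ l) := by
  have hn0 : 0 < n := hn.1
  have hn1 : n ≠ 1 := by
    rintro rfl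
    simp [Nat.divisors_one] at hsigma
  have hneven : 2 ∣ n := practical_even hn (by omega)
  set σn := ∑ d ∈ n.divisors, d with hσn
  have hσeven : 2 ∣ σn := hsigma.two_dvd
  have hnσ : n ≤ σn := by
    have : n ∈ n.divisors := Nat.mem_divisors_self n (by omega)
    exact Finset.single_le_sum (f := fun d => d) (fun _ _ => Nat.zero_le _) this
  have hprop : ∑ d ∈ n.properDivisors, d = σn - n := by
    have h := Nat.sum_divisors_eq_sum_properDivisors_add_self (n := n)
    omega
  -- B : subset of divisors summing to σn / 2
  obtain ⟨B, hB, hBsum⟩ := practical_rep_divisors hn (σn / 2) (by omega)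
  -- C : subset of proper divisors summing to (σn - n) / 2
  obtain ⟨C, hC, hCsum⟩ := practical_rep_properDivisors hn ((σn - n) / 2)
    (by rw [hprop]; omega)
  set q := p ^ l with hq
  set P := ∑ i ∈ Finset.range l, p ^ i with hP
  set N := n * q with hN
  have hN0 : 0 < N := Nat.mul_pos hn0 (Nat.pow_pos hp.pos)
  -- the underlying index set
  set T : Finset (ℕ × ℕ) := (B ×ˢ Finset.range l) ∪ (C ×ˢ {l}) with hT
  have hTmem : ∀ x ∈ T, x.1 ∣ n ∧ x.2 ≤ l := by
    intro x hx
    rcases Finset.mem_union.mp hx with hx | hx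
    · obtain ⟨h1, h2⟩ := Finset.mem_product.mp hx
      exact ⟨(Nat.mem_divisors.mp (hB h1)).1, le_of_lt (Finset.mem_range.mp h2)⟩
    · obtain ⟨h1, h2⟩ := Finset.mem_product.mp hx
      exact ⟨(Nat.mem_properDivisors.mp (hC h1)).1, le_of_eq (Finset.mem_singleton.mp h2)⟩
  set f : ℕ × ℕ → ℕ := fun x => x.1 * p ^ x.2 with hf
  have hinj : ∀ x ∈ T, ∀ y ∈ T, f x = f y → x = y := by
    intro x hx y hy hxy
    obtain ⟨hx1, hx2⟩ := hTmem x hx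
    obtain ⟨hy1, hy2⟩ := hTmem y hy
    rcases le_total x.2 y.2 with h | h
    · obtain ⟨h1, h2⟩ := pow_mul_inj hp hcop hx1 hy1 h hxy
      exact Prod.ext h1 h2
    · obtain ⟨h1, h2⟩ := pow_mul_inj hp hcop hy1 hx1 h hxy.symm
      exact Prod.ext h1.symm h2.symm
  set A := T.image f with hA
  have hdisj : Disjoint (B ×ˢ Finset.range l) (C ×ˢ {l}) := by
    rw [Finset.disjoint_left]
    intro x hx hx'
    have h1 := (Finset.mem_product.mp hx).2
    have h2 := (Finset.mem_product.mp hx').2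
    rw [Finset.mem_range] at h1
    rw [Finset.mem_singleton] at h2
    omega
  have hAsum : ∑ d ∈ A, d = (σn / 2) * P + ((σn - n) / 2) * q := by
    rw [hA, Finset.sum_image hinj, hT, Finset.sum_union hdisj]
    congr 1
    · rw [Finset.sum_product, hBsum, Finset.sum_mul]
      refine Finset.sum_congr rfl (fun d _ => ?_)
      rw [hP, Finset.mul_sum]
    · rw [Finset.sum_product, hCsum, Finset.sum_mul]
      refine Finset.sum_congr rfl (fun d _ => ?_)
      simp [hf, hq]
  have hAsub : A ⊆ N.properDivisors := by
    intro x hx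
    obtain ⟨a, ha, rfl⟩ := Finset.mem_image.mp hx
    obtain ⟨ha1, ha2⟩ := hTmem a ha
    have hfa : f a = a.1 * p ^ a.2 := rfl
    rw [hfa]
    refine Nat.mem_properDivisors.mpr ⟨mul_dvd_mul ha1 (pow_dvd_pow p ha2), ?_⟩
    have han : a.1 ≤ n := Nat.le_of_dvd hn0 ha1
    rcases Finset.mem_union.mp ha with ha' | ha'
    · have h2 : a.2 < l := Finset.mem_range.mp (Finset.mem_product.mp ha').2
      calc a.1 * p ^ a.2 ≤ n * p ^ a.2 := Nat.mul_le_mul_right _ han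
        _ < n * p ^ l :=
            mul_lt_mul_of_pos_left (Nat.pow_lt_pow_right hp.one_lt h2) hn0
    · have h1 : a.1 < n := (Nat.mem_properDivisors.mp (hC (Finset.mem_product.mp ha').1)).2
      have h2 : a.2 = l := Finset.mem_singleton.mp (Finset.mem_product.mp ha').2
      rw [h2]
      exact mul_lt_mul_of_pos_right h1 (Nat.pow_pos hp.pos)
  -- total sum of proper divisors of N
  set R := σn * (P + q) with hR
  have hσN : ∑ d ∈ N.divisors, d = R := by
    rw [hR]
    have hmul : Nat.Coprime n q := (Nat.Coprime.pow_right l hcop)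
    have h1 := ArithmeticFunction.isMultiplicative_sigma (k := 1)
    have h2 := h1.map_mul_of_coprime hmul
    rw [ArithmeticFunction.sigma_one_apply, ArithmeticFunction.sigma_one_apply,
      ArithmeticFunction.sigma_one_apply] at h2
    rw [hN, h2, hq, Nat.sum_divisors_prime_pow hp, Finset.sum_range_succ]
  have hpropN : ∑ d ∈ N.properDivisors, d = R - N := by
    have h := Nat.sum_divisors_eq_sum_properDivisors_add_self (n := N)
    have hNle : N ≤ ∑ d ∈ N.divisors, d := by
      have : N ∈ N.divisors := Nat.mem_divisors_self N (by omega)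
      exact Finset.single_le_sum (f := fun d => d) (fun _ _ => Nat.zero_le _) this
    omega
  refine ⟨hN0, A, hAsub, ?_⟩
  have hsd : ∑ d ∈ N.properDivisors \ A, d + ∑ d ∈ A, d = ∑ d ∈ N.properDivisors, d :=
    Finset.sum_sdiff hAsub
  -- key arithmetic identity
  have hkey : 2 * ((σn / 2) * P + ((σn - n) / 2) * q) + N = R := by
    rw [hN, hR]
    have e1 : 2 * (σn / 2) = σn := by omega
    have e2 : 2 * ((σn - n) / 2) = σn - n := by
      have : 2 ∣ (σn - n) := Nat.dvd_sub hσeven hneven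
      omega
    have e3 : σn - n + n = σn := by omega
    calc 2 * ((σn / 2) * P + ((σn - n) / 2) * q) + n * q
        = (2 * (σn / 2)) * P + ((2 * ((σn - n) / 2)) + n) * q := by ring
      _ = σn * P + σn * q := by rw [e1, e2, e3]
      _ = σn * (P + q) := by ring
  have h2s : ∑ d ∈ N.properDivisors, d = 2 * ∑ d ∈ A, d := by
    rw [hAsum, hpropN, ← hkey]
    exact Nat.add_sub_cancel _ _
  omega
end

section
/- Let n be a Zumkeller number with prime factorization n = p_1^{k_1}·p_2^{k_2}···p_m^{k_m} (the p_i distinct primes). Then for any positive integers l_1, ..., l_m, the number p_1^{k_1 + l_1(k_1+1)}·p_2^{k_2 + l_2(k_2+1)}···p_m^{k_m + l_m(k_m+1)} is a Zumkeller number. -/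
lemma sum_pow_range_mul (p J K : ℕ) :
    ∑ i ∈ Finset.range (J * K), p ^ i =
      (∑ b ∈ Finset.range J, p ^ (b * K)) * ∑ a ∈ Finset.range K, p ^ a := by
  induction J with
  | zero => simp
  | succ J ih =>
    rw [Nat.succ_mul, Finset.sum_range_add, ih, Finset.sum_range_succ, add_mul]
    congr 1
    rw [Finset.mul_sum]
    exact Finset.sum_congr rfl fun a _ => pow_add p (J * K) a

lemma zumkeller_mul_prime_pow {M p : ℕ} (hp : p.Prime) (hM : Zumkeller M) (j : ℕ) :
    Zumkeller (M * p ^ (j * (M.factorization p + 1))) := by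
  obtain ⟨hMpos, A, hA, hsum⟩ := hM
  set k := M.factorization p with hk
  set K := k + 1 with hK
  have hMne : M ≠ 0 := hMpos.ne'
  have hpne : p ^ (j * K) ≠ 0 := (pow_pos hp.pos _).ne'
  set N := M * p ^ (j * K) with hN
  have hNne : N ≠ 0 := mul_ne_zero hMne hpne
  -- key fun
  set f : ℕ × ℕ → ℕ := fun bd => p ^ (bd.1 * K) * bd.2 with hf
  set B := (Finset.range (j + 1) ×ˢ A).image f with hB
  -- division helper
  have hdiv : ∀ x y : ℕ, y ≤ k → (x * K + y) / K = x := by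
    intro x y hy
    rw [mul_comm, Nat.mul_add_div (by omega), Nat.div_eq_of_lt (by omega), add_zero]
  have hfacA : ∀ d ∈ A, d.factorization p ≤ k := by
    intro d hd
    have hd' := hA hd
    rw [Nat.mem_divisors] at hd'
    have hdne : d ≠ 0 := by
      rintro rfl; exact hMne (zero_dvd_iff.mp hd'.1)
    exact (Nat.factorization_le_iff_dvd hdne hMne).2 hd'.1 p
  have hinj : ∀ x ∈ Finset.range (j + 1) ×ˢ A, ∀ y ∈ Finset.range (j + 1) ×ˢ A,
      f x = f y → x = y := by
    rintro ⟨b, d⟩ hbd ⟨b', d'⟩ hbd' heq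
    simp only [Finset.mem_product, Finset.mem_range] at hbd hbd'
    have hdne : d ≠ 0 := by
      have := hA hbd.2; rw [Nat.mem_divisors] at this
      rintro rfl; exact hMne (zero_dvd_iff.mp this.1)
    have hdne' : d' ≠ 0 := by
      have := hA hbd'.2; rw [Nat.mem_divisors] at this
      rintro rfl; exact hMne (zero_dvd_iff.mp this.1)
    have h1 := congrArg (fun x => x.factorization p) heq
    simp only [hf, Nat.factorization_mul (pow_ne_zero _ hp.pos.ne') hdne,
      Nat.factorization_mul (pow_ne_zero _ hp.pos.ne') hdne', hp.factorization_pow,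
      Finsupp.coe_add, Pi.add_apply, Finsupp.single_eq_same] at h1
    have hbb : b = b' := by
      have e1 := hdiv b (d.factorization p) (hfacA d hbd.2)
      have e2 := hdiv b' (d'.factorization p) (hfacA d' hbd'.2)
      rw [← e1, ← e2, h1]
    subst hbb
    have hdd : d = d' := by
      have := heq
      simp only [hf] at this
      exact Nat.eq_of_mul_eq_mul_left (pow_pos hp.pos _) this
    simp [hdd]
  have hBsub : B ⊆ N.divisors := by
    intro x hx
    rw [hB, Finset.mem_image] at hx
    obtain ⟨⟨b, d⟩, hbd, rfl⟩ := hx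
    simp only [Finset.mem_product, Finset.mem_range] at hbd
    rw [Nat.mem_divisors]
    refine ⟨?_, hNne⟩
    have hd : d ∣ M := (Nat.mem_divisors.mp (hA hbd.2)).1
    have : p ^ (b * K) ∣ p ^ (j * K) :=
      pow_dvd_pow p (Nat.mul_le_mul_right K (by omega))
    calc f (b, d) = d * p ^ (b * K) := mul_comm _ _
      _ ∣ M * p ^ (j * K) := mul_dvd_mul hd this
  -- sum over B
  set T := ∑ b ∈ Finset.range (j + 1), p ^ (b * K) with hT
  have hBsum : ∑ d ∈ B, d = T * ∑ d ∈ A, d := by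
    rw [hB, Finset.sum_image hinj, Finset.sum_product, hT, Finset.sum_mul]
    exact Finset.sum_congr rfl fun b _ => by rw [Finset.mul_sum]
  -- sigma computations
  set m := ordCompl[p] M with hm
  have hcop : Nat.Coprime p m := Nat.coprime_ordCompl hp hMne
  have hMeq : p ^ k * m = M := Nat.ordProj_mul_ordCompl_eq_self M p
  have hNeq : N = p ^ (k + j * K) * m := by
    rw [hN, ← hMeq]; ring
  have hσM : ∑ d ∈ M.divisors, d =
      (∑ a ∈ Finset.range K, p ^ a) * ∑ d ∈ m.divisors, d := by
    rw [← hMeq, (hcop.pow_left k).sum_divisors_mul,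
      Nat.sum_divisors_prime_pow hp]
  have hσN : ∑ d ∈ N.divisors, d = T * ∑ d ∈ M.divisors, d := by
    rw [hNeq, (hcop.pow_left (k + j * K)).sum_divisors_mul,
      Nat.sum_divisors_prime_pow hp, hσM]
    have hkK : k + j * K + 1 = (j + 1) * K := by rw [hK]; ring
    rw [hkK, sum_pow_range_mul, mul_assoc]
  have h2A : ∑ d ∈ M.divisors, d = 2 * ∑ d ∈ A, d := by
    have := Finset.sum_sdiff hA (f := id)
    simp only [id] at this
    omega
  refine ⟨Nat.pos_of_ne_zero hNne, B, hBsub, ?_⟩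
  have hsd := Finset.sum_sdiff hBsub (f := id)
  simp only [id] at hsd
  have : ∑ d ∈ N.divisors, d = 2 * ∑ d ∈ B, d := by
    rw [hσN, h2A, hBsum]; ring
  omega

theorem stmt10 (n : ℕ) (hz : Zumkeller n) (l : ℕ → ℕ)
    (hl : ∀ p ∈ n.primeFactors, 0 < l p) :
    Zumkeller (∏ p ∈ n.primeFactors,
      p ^ (n.factorization p + l p * (n.factorization p + 1))) := by
  have hn0 : n ≠ 0 := hz.1.ne'
  have key : ∀ s ⊆ n.primeFactors,
      Zumkeller (n * ∏ p ∈ s, p ^ (l p * (n.factorization p + 1))) := by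
    intro s
    induction s using Finset.induction with
    | empty => simpa using hz
    | @insert q s hq ih =>
      intro hsub
      have hs' : s ⊆ n.primeFactors := (Finset.subset_insert q s).trans hsub
      have hqmem : q ∈ n.primeFactors := hsub (Finset.mem_insert_self q s)
      have hqp : q.Prime := Nat.prime_of_mem_primeFactors hqmem
      set M := n * ∏ p ∈ s, p ^ (l p * (n.factorization p + 1)) with hM
      have hMz := ih hs'
      have hprodne : (∏ p ∈ s, p ^ (l p * (n.factorization p + 1))) ≠ 0 := by
        apply Finset.prod_ne_zero_iff.mpr
        intro p hp
        exact pow_ne_zero _ (Nat.prime_of_mem_primeFactors (hs' hp)).pos.ne'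
      have hnd : ¬ q ∣ ∏ p ∈ s, p ^ (l p * (n.factorization p + 1)) := by
        intro hdvd
        obtain ⟨p, hps, hpd⟩ := hqp.prime.exists_mem_finset_dvd hdvd
        have hpq : q = p :=
          (Nat.prime_dvd_prime_iff_eq hqp (Nat.prime_of_mem_primeFactors (hs' hps))).mp
            (hqp.dvd_of_dvd_pow hpd)
        exact hq (hpq ▸ hps)
      have hfact : M.factorization q = n.factorization q := by
        rw [hM, Nat.factorization_mul hn0 hprodne]
        simp [Nat.factorization_eq_zero_of_not_dvd hnd]
      have := zumkeller_mul_prime_pow hqp hMz (l q)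
      rw [hfact] at this
      have heq : M * q ^ (l q * (n.factorization q + 1)) =
          n * ∏ p ∈ insert q s, p ^ (l p * (n.factorization p + 1)) := by
        rw [Finset.prod_insert hq, hM]; ring
      rwa [heq] at this
  have hprod : (∏ p ∈ n.primeFactors,
      p ^ (n.factorization p + l p * (n.factorization p + 1))) =
      n * ∏ p ∈ n.primeFactors, p ^ (l p * (n.factorization p + 1)) := by
    have hself : ∏ p ∈ n.primeFactors, p ^ n.factorization p = n := by
      rw [← Nat.support_factorization]
      exact Nat.factorization_prod_pow_eq_self hn0
    calc ∏ p ∈ n.primeFactors, p ^ (n.factorization p + l p * (n.factorization p + 1))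
        = (∏ p ∈ n.primeFactors, p ^ n.factorization p) *
          ∏ p ∈ n.primeFactors, p ^ (l p * (n.factorization p + 1)) := by
          rw [← Finset.prod_mul_distrib]
          exact Finset.prod_congr rfl fun p _ => pow_add p _ _
      _ = n * ∏ p ∈ n.primeFactors, p ^ (l p * (n.factorization p + 1)) := by rw [hself]
  rw [hprod]
  exact key _ (le_refl _)
end

section
/- If n is a Zumkeller number and p is a prime with gcd(n, p) = 1, then n·p^l is a Zumkeller number for every positive integer l. -/
theorem stmt11 (n p l : ℕ) (hz : Zumkeller n) (hp : p.Prime) (hcop : Nat.gcd n p = 1)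
    (hl : 0 < l) : Zumkeller (n * p ^ l) := by
  obtain ⟨hn, A, hA, hsum⟩ := hz
  have hpos : 0 < n * p ^ l := Nat.mul_pos hn (pow_pos hp.pos _)
  have hp0 : 0 < p := hp.pos
  set f : ℕ × ℕ → ℕ := fun x => x.1 * p ^ x.2 with hf
  have hinj : Set.InjOn f (n.divisors ×ˢ Finset.range (l + 1)) := by
    rintro ⟨d, i⟩ hdi ⟨e, j⟩ hej h
    simp only [Finset.coe_product, Set.mem_prod, Finset.mem_coe, Nat.mem_divisors,
      Finset.mem_range] at hdi hej
    have hdp : Nat.Coprime d p := Nat.Coprime.coprime_dvd_left hdi.1.1 hcop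
    have hep : Nat.Coprime e p := Nat.Coprime.coprime_dvd_left hej.1.1 hcop
    simp only [hf] at h
    have hij : i = j := by
      by_contra hne
      rcases Nat.lt_or_ge i j with hlt | hge
      · have : p ∣ d := by
          have : d * p ^ i = e * p ^ (j - i) * p ^ i := by
            rw [mul_assoc, ← pow_add, Nat.sub_add_cancel hlt.le]; exact h
          have hd : d = e * p ^ (j - i) := Nat.eq_of_mul_eq_mul_right (pow_pos hp0 _) this
          exact hd ▸ Dvd.dvd.mul_left (dvd_pow_self p (by omega)) e
        exact absurd (Nat.eq_one_of_dvd_one (hdp ▸ Nat.dvd_gcd this dvd_rfl)) hp.one_lt.ne'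
      · have hlt : j < i := lt_of_le_of_ne hge (fun h' => hne h'.symm)
        have : p ∣ e := by
          have : e * p ^ j = d * p ^ (i - j) * p ^ j := by
            rw [mul_assoc, ← pow_add, Nat.sub_add_cancel hlt.le]; exact h.symm
          have he : e = d * p ^ (i - j) := Nat.eq_of_mul_eq_mul_right (pow_pos hp0 _) this
          exact he ▸ Dvd.dvd.mul_left (dvd_pow_self p (by omega)) d
        exact absurd (Nat.eq_one_of_dvd_one (hep ▸ Nat.dvd_gcd this dvd_rfl)) hp.one_lt.ne'
    subst hij
    have : d = e := Nat.eq_of_mul_eq_mul_right (pow_pos hp0 _) h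
    simp [this]
  have hD : (n * p ^ l).divisors = Finset.image f (n.divisors ×ˢ Finset.range (l + 1)) := by
    ext e
    simp only [Nat.mem_divisors, Finset.mem_image, Finset.mem_product, Finset.mem_range]
    constructor
    · rintro ⟨hd, -⟩
      obtain ⟨y, z, hy, hz, hyz⟩ := Nat.dvd_mul.mp hd
      obtain ⟨k, hk, rfl⟩ := (Nat.dvd_prime_pow hp).mp hz
      exact ⟨⟨y, k⟩, ⟨⟨hy, hn.ne'⟩, by omega⟩, hyz⟩
    · rintro ⟨⟨d, i⟩, ⟨⟨hd, -⟩, hi⟩, rfl⟩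
      exact ⟨mul_dvd_mul hd (pow_dvd_pow p (by omega)), hpos.ne'⟩
  set S := ∑ i ∈ Finset.range (l + 1), p ^ i with hS
  have sum_image : ∀ B ⊆ n.divisors,
      ∑ d ∈ Finset.image f (B ×ˢ Finset.range (l + 1)), d = (∑ d ∈ B, d) * S := by
    intro B hB
    have hinj' : Set.InjOn f ↑(n.divisors ×ˢ Finset.range (l + 1)) := by
      rw [Finset.coe_product]; exact hinj
    rw [Finset.sum_image (fun x hx y hy h => hinj'
      (Finset.mem_coe.mpr (Finset.product_subset_product_left hB hx))
      (Finset.mem_coe.mpr (Finset.product_subset_product_left hB hy)) h)]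
    rw [Finset.sum_product]
    simp only [hf, hS]
    rw [Finset.sum_comm]
    simp only [← Finset.sum_mul]
    rw [Finset.mul_sum]
  refine ⟨hpos, Finset.image f (A ×ˢ Finset.range (l + 1)), ?_, ?_⟩
  · rw [hD]
    exact Finset.image_subset_image (Finset.product_subset_product_left hA)
  · have hsub : Finset.image f (A ×ˢ Finset.range (l + 1)) ⊆ (n * p ^ l).divisors := by
      rw [hD]; exact Finset.image_subset_image (Finset.product_subset_product_left hA)
    have h1 := Finset.sum_sdiff (f := id) hsub
    have h2 := Finset.sum_sdiff (f := id) hA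
    simp only [id] at h1 h2
    have hA' : ∑ d ∈ Finset.image f (A ×ˢ Finset.range (l + 1)), d = (∑ d ∈ A, d) * S :=
      sum_image A hA
    have hDsum : ∑ d ∈ (n * p ^ l).divisors, d = (∑ d ∈ n.divisors, d) * S := by
      rw [hD, sum_image n.divisors (le_refl _)]
    have key : (∑ d ∈ n.divisors, d) * S = (∑ d ∈ A, d) * S + (∑ d ∈ A, d) * S := by
      rw [← h2, hsum]; ring
    omega
end

section
/- Let l be a positive integer, let n be a positive integer that is not a Zumkeller number, and let p be a prime with gcd(n, p) = 1. If n·p^l is a Zumkeller number, then p ≤ σ(n); moreover, if additionally σ(n) is odd, then l is odd. -/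
open Finset

lemma key_decomp {n p : ℕ} (l : ℕ) (hn : 0 < n) (hp : p.Prime)
    (hcop : Nat.gcd n p = 1) (A : Finset ℕ) (hA : A ⊆ (n * p ^ l).divisors) :
    ∑ a ∈ A, a
      = ∑ i ∈ range (l + 1),
          (∑ d ∈ n.divisors.filter (fun d => d * p ^ i ∈ A), d) * p ^ i := by
  have hstep : ∀ i ∈ range (l+1),
      (∑ d ∈ n.divisors.filter (fun d => d * p ^ i ∈ A), d) * p ^ i
      = ∑ d ∈ n.divisors.filter (fun d => d * p ^ i ∈ A), d * p ^ i := by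
    intro i _; rw [Finset.sum_mul]
  rw [Finset.sum_congr rfl hstep,
    Finset.sum_sigma' (range (l+1)) (fun i => n.divisors.filter (fun d => d * p ^ i ∈ A))
      (fun i d => d * p ^ i)]
  refine (Finset.sum_nbij' (fun x => x.2 * p ^ x.1)
    (fun a => ⟨a.factorization p, a / p ^ (a.factorization p)⟩) ?_ ?_ ?_ ?_ ?_).symm
  · rintro ⟨i, d⟩ hx
    simp only [mem_sigma, mem_range, mem_filter] at hx
    exact hx.2.2
  · intro a ha
    have haD := hA ha
    rw [Nat.mem_divisors] at haD
    have ha0 : a ≠ 0 := by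
      rintro rfl
      exact haD.2 (zero_dvd_iff.mp haD.1)
    have hpn : Nat.Coprime p n := (Nat.coprime_comm.mp hcop)
    have hvle : a.factorization p ≤ l := by
      have h1 : p ^ a.factorization p ∣ n * p ^ l :=
        (Nat.ordProj_dvd a p).trans haD.1
      have h2 : p ^ a.factorization p ∣ p ^ l :=
        (Nat.Coprime.pow_left _ hpn).dvd_of_dvd_mul_left h1
      exact (Nat.pow_dvd_pow_iff_le_right hp.one_lt).mp h2
    have hdco : Nat.Coprime (a / p ^ a.factorization p) (p ^ l) :=
      ((Nat.coprime_ordCompl hp ha0).symm).pow_right _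
    have hddvd : a / p ^ a.factorization p ∣ n := by
      have : a / p ^ a.factorization p ∣ n * p ^ l :=
        (Nat.ordCompl_dvd a p).trans haD.1
      exact hdco.dvd_of_dvd_mul_right this
    have heq : a / p ^ a.factorization p * p ^ a.factorization p = a := by
      rw [mul_comm]; exact Nat.ordProj_mul_ordCompl_eq_self a p
    simp only [mem_sigma, mem_range, mem_filter, Nat.mem_divisors]
    refine ⟨Nat.lt_succ_of_le hvle, ⟨hddvd, hn.ne'⟩, ?_⟩
    rw [heq]; exact ha
  · rintro ⟨i, d⟩ hx
    simp only [mem_sigma, mem_range, mem_filter, Nat.mem_divisors] at hx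
    have hd0 : d ≠ 0 := by
      rintro rfl
      exact hx.2.1.2 (zero_dvd_iff.mp hx.2.1.1)
    have hdp : Nat.Coprime d p := Nat.Coprime.coprime_dvd_left hx.2.1.1 hcop
    have hfac : (d * p ^ i).factorization p = i := by
      rw [Nat.factorization_mul hd0 (pow_ne_zero _ hp.pos.ne'),
        Nat.Prime.factorization_pow hp]
      have : d.factorization p = 0 :=
        Nat.factorization_eq_zero_of_not_dvd (Nat.Prime.coprime_iff_not_dvd hp |>.mp hdp.symm)
      simp [this]
    have : d * p ^ i / p ^ ((d * p ^ i).factorization p) = d := by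
      rw [hfac, Nat.mul_div_cancel _ (pow_pos hp.pos i)]
    simp only [hfac, this]
    rw [Nat.mul_div_cancel _ (pow_pos hp.pos i)]
  · intro a ha
    have heq : a / p ^ a.factorization p * p ^ a.factorization p = a := by
      rw [mul_comm]; exact Nat.ordProj_mul_ordCompl_eq_self a p
    exact heq
  · rintro ⟨i, d⟩ _; rfl

lemma sigma_formula {n p : ℕ} (l : ℕ) (hn : 0 < n) (hp : p.Prime)
    (hcop : Nat.gcd n p = 1) :
    ∑ d ∈ (n * p ^ l).divisors, d
      = (∑ d ∈ n.divisors, d) * ∑ i ∈ range (l + 1), p ^ i := by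
  rw [key_decomp l hn hp hcop _ (subset_refl _), Finset.mul_sum]
  refine Finset.sum_congr rfl fun i hi => ?_
  rw [Finset.filter_true_of_mem]
  intro d hd
  rw [Nat.mem_divisors] at hd ⊢
  exact ⟨mul_dvd_mul hd.1 (pow_dvd_pow p (Nat.lt_succ_iff.mp (mem_range.mp hi))),
    (Nat.mul_pos hn (pow_pos hp.pos l)).ne'⟩

theorem stmt12 (n p l : ℕ) (hl : 0 < l) (hn : 0 < n) (hnz : ¬ Zumkeller n)
    (hp : p.Prime) (hcop : Nat.gcd n p = 1) (hz : Zumkeller (n * p ^ l)) :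
    p ≤ (∑ d ∈ n.divisors, d) ∧ (Odd (∑ d ∈ n.divisors, d) → Odd l) := by
  obtain ⟨hNpos, A, hA, hsum⟩ := hz
  set σn := ∑ d ∈ n.divisors, d with hσn
  set S := ∑ i ∈ range (l + 1), p ^ i with hS
  set sA := ∑ a ∈ A, a with hsA
  have h2 : 2 * sA = σn * S := by
    have h0 : ∑ d ∈ (n * p ^ l).divisors \ A, d + sA = ∑ d ∈ (n * p ^ l).divisors, d :=
      Finset.sum_sdiff hA
    have hf := sigma_formula l hn hp hcop
    rw [← hσn, ← hS] at hf
    omega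
  set s : ℕ → ℕ := fun i => ∑ d ∈ n.divisors.filter (fun d => d * p ^ i ∈ A), d with hs
  have hdec : sA = ∑ i ∈ range (l + 1), s i * p ^ i := key_decomp l hn hp hcop A hA
  constructor
  · by_contra hgt
    push_neg at hgt
    have key : (∑ i ∈ range (l + 1), (2 * (s i : ℤ) - σn) * p ^ i) = 0 := by
      have hz2 : (2 * ∑ i ∈ range (l + 1), s i * p ^ i : ℕ) = σn * S := by
        rw [← hdec]; exact h2
      have hz3 := congrArg (Nat.cast : ℕ → ℤ) hz2
      push_cast at hz3
      have : (∑ i ∈ range (l + 1), (2 * (s i : ℤ) - σn) * p ^ i)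
          = 2 * (∑ i ∈ range (l + 1), (s i : ℤ) * p ^ i)
            - σn * ∑ i ∈ range (l + 1), (p : ℤ) ^ i := by
        rw [Finset.mul_sum, Finset.mul_sum, ← Finset.sum_sub_distrib]
        exact Finset.sum_congr rfl fun i _ => by ring
      rw [this, hz3, hS]
      push_cast
      ring
    rw [Finset.sum_range_succ'] at key
    have hdvd0 : (p : ℤ) ∣ (2 * (s 0 : ℤ) - σn) := by
      have heq : (2 * (s 0 : ℤ) - σn) * p ^ 0
          = -∑ i ∈ range l, (2 * (s (i + 1) : ℤ) - σn) * p ^ (i + 1) := by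
        linarith [key]
      have : (2 * (s 0 : ℤ) - σn) = -∑ i ∈ range l, (2 * (s (i + 1) : ℤ) - σn) * p ^ (i + 1) := by
        simpa using heq
      rw [this]
      exact dvd_neg.mpr (Finset.dvd_sum fun i _ =>
        dvd_mul_of_dvd_right (dvd_pow_self (p : ℤ) (Nat.succ_ne_zero i)) _)
    have hbound : |2 * (s 0 : ℤ) - σn| < p := by
      have h1 : s 0 ≤ σn := Finset.sum_le_sum_of_subset (Finset.filter_subset _ _)
      have h1' : (s 0 : ℤ) ≤ σn := by exact_mod_cast h1
      have h2' : (σn : ℤ) < p := by exact_mod_cast hgt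
      have h3' : (0 : ℤ) ≤ s 0 := by positivity
      rw [abs_lt]
      constructor <;> linarith
    have hc0 : 2 * (s 0 : ℤ) - σn = 0 := Int.eq_zero_of_abs_lt_dvd hdvd0 hbound
    have h2s0 : 2 * s 0 = σn := by
      have : (2 * s 0 : ℤ) = σn := by linarith
      exact_mod_cast this
    apply hnz
    refine ⟨hn, n.divisors.filter (fun d => d * p ^ 0 ∈ A), Finset.filter_subset _ _, ?_⟩
    have hsd : ∑ d ∈ n.divisors \ n.divisors.filter (fun d => d * p ^ 0 ∈ A), d + s 0 = σn :=
      Finset.sum_sdiff (Finset.filter_subset _ _)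
    simp only [hs] at h2s0 hsd
    omega
  · intro hodd
    have heven : Even (σn * S) := ⟨sA, by omega⟩
    have hevenS : Even S := by
      rcases Nat.even_mul.mp heven with h | h
      · exact absurd h (Nat.not_even_iff_odd.mpr hodd)
      · exact h
    by_cases hp2 : p = 2
    · exfalso
      subst hp2
      have hoddS : Odd S := by
        rw [hS, Finset.sum_range_succ']
        refine Even.add_odd ?_ (by norm_num)
        have : ∑ i ∈ range l, 2 ^ (i + 1) = (∑ i ∈ range l, 2 ^ i) * 2 := by
          rw [Finset.sum_mul]
          exact Finset.sum_congr rfl fun i _ => (pow_succ 2 i)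
        rw [this]
        exact ⟨∑ i ∈ range l, 2 ^ i, by ring⟩
      exact (Nat.not_even_iff_odd.mpr hoddS) hevenS
    · have hoddp : Odd p := hp.odd_of_ne_two hp2
      have hmod : S % 2 = (l + 1) % 2 := by
        rw [hS, Finset.sum_nat_mod]
        have hc : ∀ i ∈ range (l + 1), p ^ i % 2 = 1 :=
          fun i _ => Nat.odd_iff.mp (hoddp.pow)
        rw [Finset.sum_congr rfl hc]
        simp [Finset.sum_const, Finset.card_range]
      have h0 := Nat.even_iff.mp hevenS
      rw [hmod] at h0
      rw [Nat.odd_iff]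
      omega
end

section
/- Let n be a positive integer and let 1 = a_1 < a_2 < ... < a_k = n be the increasing list of all positive divisors of n. If a_{i+1} ≤ 2·a_i for every i with 1 ≤ i ≤ k−1 and σ(n) is even, then n is a Zumkeller number. -/
lemma listSub (l : List ℕ) (hl : ∀ i (h : i < l.length), l[i] ≤ 1 + (l.take i).sum) :
    ∀ m ≤ l.sum, ∃ s : List ℕ, s.Sublist l ∧ s.sum = m := by
  induction l using List.reverseRecOn with
  | nil =>
    intro m hm
    exact ⟨[], List.Sublist.refl _, by
      simpa using (Nat.le_zero.mp (by simpa using hm)).symm⟩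
  | append_singleton t a ih =>
    have ht : ∀ i (h : i < t.length), t[i] ≤ 1 + (t.take i).sum := by
      intro i hi
      have := hl i (by simp; omega)
      rwa [List.getElem_append_left hi, List.take_append_of_le_length (by omega)] at this
    have ha : a ≤ 1 + t.sum := by
      have := hl t.length (by simp)
      simpa using this
    intro m hm
    simp only [List.sum_append, List.sum_cons, List.sum_nil] at hm
    by_cases hm' : m ≤ t.sum
    · obtain ⟨s, hs, hsum⟩ := ih ht m hm'
      exact ⟨s, hs.trans (List.sublist_append_left t [a]), hsum⟩
    · obtain ⟨s, hs, hsum⟩ := ih ht (m - a) (by omega)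
      refine ⟨s ++ [a], hs.append (List.Sublist.refl _), ?_⟩
      simp [hsum]; omega

lemma sortedSum (s : Finset ℕ) : (s.sort (· ≤ ·)).sum = ∑ d ∈ s, d := by
  rw [(s.sort_perm_toList (· ≤ ·)).sum_eq, ← Finset.sum_map_toList]; simp

set_option maxRecDepth 10000 in
theorem stmt13 (n : ℕ) (hn : 0 < n)
    (h : ∀ i : ℕ, (hi : i + 1 < (n.divisors.sort (· ≤ ·)).length) →
      (n.divisors.sort (· ≤ ·))[i + 1]'hi ≤
        2 * (n.divisors.sort (· ≤ ·))[i]'(by omega))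
    (hsigma : Even (∑ d ∈ n.divisors, d)) :
    Zumkeller n := by
  set l := n.divisors.sort (· ≤ ·) with hl
  clear_value l
  have hmem : ∀ x ∈ l, x ∈ n.divisors := by
    intro x hx
    rw [hl] at hx
    exact (Finset.mem_sort _).mp hx
  have h1 : (1 : ℕ) ∈ l := by
    rw [hl, Finset.mem_sort]
    exact Nat.one_mem_divisors.mpr hn.ne'
  obtain ⟨j, hj, hj1⟩ := List.mem_iff_getElem.mp h1
  have hlen : 0 < l.length := by omega
  have hsorted : l.Pairwise (· ≤ ·) := hl ▸ Finset.pairwise_sort _ _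
  have hmemdiv : ∀ i (hi : i < l.length), l[i] ∈ n.divisors := fun i hi =>
    hmem _ (List.getElem_mem hi)
  have h0 : l[0]'hlen = 1 := by
    have hpos : 1 ≤ l[0]'hlen := Nat.pos_of_mem_divisors (hmemdiv 0 hlen)
    rcases Nat.eq_zero_or_pos j with rfl | hjpos
    · omega
    · have := (List.pairwise_iff_getElem.mp hsorted) 0 j hlen hj hjpos
      omega
  have hcomplete : ∀ i (hi : i < l.length), l[i] ≤ 1 + (l.take i).sum := by
    intro i
    induction i with
    | zero => intro hi; simp [h0]
    | succ i ih =>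
      intro hi
      have hi' : i < l.length := by omega
      have h2 : l[i + 1] ≤ 2 * l[i] := by subst hl; exact h i hi
      have h3 := ih hi'
      have h4 : (l.take (i + 1)).sum = (l.take i).sum + l[i] := by
        rw [List.take_succ, List.getElem?_eq_getElem hi', List.sum_append]; rfl
      omega
  obtain ⟨k, hk⟩ := hsigma
  have hkle : k ≤ l.sum := by rw [hl, sortedSum]; omega
  obtain ⟨s, hs, hsum⟩ := listSub l hcomplete k hkle
  have hnodup : s.Nodup := hs.nodup (hl ▸ Finset.sort_nodup _ _)
  have hsub : s.toFinset ⊆ n.divisors := by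
    intro x hx
    rw [List.mem_toFinset] at hx
    exact hmem _ (hs.subset hx)
  have hA : ∑ d ∈ s.toFinset, d = k := by
    rw [List.sum_toFinset _ hnodup]
    simpa using hsum
  refine ⟨hn, s.toFinset, hsub, ?_⟩
  have := Finset.sum_sdiff (f := fun d => d) hsub
  omega
end

section
/- For every integer n ≥ 3, the number n! is a Zumkeller number. -/
/-- sum of divisors -/
def sig (n : ℕ) : ℕ := ∑ d ∈ n.divisors, d

/-- every `m ≤ σ(n)` is a sum of distinct divisors of `n` -/
def Complete (n : ℕ) : Prop :=
  0 < n ∧ ∀ m ≤ sig n, ∃ A ⊆ n.divisors, ∑ d ∈ A, d = m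

lemma le_sig {n : ℕ} (hn : 0 < n) : n ≤ sig n :=
  Finset.single_le_sum (f := fun i => i) (fun i _ => Nat.zero_le i)
    (Nat.mem_divisors_self n hn.ne')

lemma sig_prime_pow {p : ℕ} (hp : p.Prime) (e : ℕ) :
    sig (p ^ e) = ∑ k ∈ Finset.range (e + 1), p ^ k := by
  rw [sig, ← ArithmeticFunction.sigma_one_apply, ArithmeticFunction.sigma_one_apply_prime_pow hp]

lemma geom_eq {p : ℕ} (hp : 1 ≤ p) (e : ℕ) :
    (p - 1) * (∑ k ∈ Finset.range (e + 1), p ^ k) + 1 = p ^ (e + 1) := by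
  obtain ⟨q, rfl⟩ : ∃ q, p = q + 1 := ⟨p - 1, by omega⟩
  simp only [Nat.add_sub_cancel]
  induction e with
  | zero => simp
  | succ e ih =>
    rw [Finset.sum_range_succ, Nat.mul_add, add_right_comm, ih]
    ring

lemma complete_one : Complete 1 := by
  refine ⟨one_pos, fun m hm => ?_⟩
  have hs : sig 1 = 1 := by simp [sig]
  rw [hs] at hm
  interval_cases m
  · exact ⟨∅, by simp⟩
  · exact ⟨{1}, by simp⟩

lemma Complete.mul_prime_pow {m p : ℕ} (hm : Complete m) (hp : p.Prime) (hpm : ¬ p ∣ m)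
    (hple : p ≤ sig m + 1) : ∀ e : ℕ, Complete (p ^ e * m) := by
  intro e
  induction e with
  | zero => simpa using hm
  | succ e IH =>
    have hmpos := hm.1
    have hppos : 0 < p := hp.pos
    have hcop : Nat.Coprime p m := (Nat.Prime.coprime_iff_not_dvd hp).mpr hpm
    have hpos1 : 0 < p ^ e * m := Nat.mul_pos (Nat.pow_pos hppos) hmpos
    have hpos2 : 0 < p ^ (e + 1) * m := Nat.mul_pos (Nat.pow_pos hppos) hmpos
    have hsig1 : sig (p ^ e * m) = sig (p ^ e) * sig m :=
      Nat.Coprime.sum_divisors_mul (Nat.Coprime.pow_left _ hcop)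
    have hsig2 : sig (p ^ (e + 1) * m) = sig (p ^ (e + 1)) * sig m :=
      Nat.Coprime.sum_divisors_mul (Nat.Coprime.pow_left _ hcop)
    have hstep : sig (p ^ (e + 1)) = sig (p ^ e) + p ^ (e + 1) := by
      rw [sig_prime_pow hp, sig_prime_pow hp, Finset.sum_range_succ]
    have hPpos : 0 < p ^ (e + 1) := Nat.pow_pos hppos
    have hsum : sig (p ^ (e + 1) * m) = sig (p ^ e * m) + p ^ (e + 1) * sig m := by
      rw [hsig2, hstep, Nat.add_mul, ← hsig1]
    -- key inequality : p ^ (e+1) ≤ sig (p^e * m) + 1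
    have hkey : p ^ (e + 1) ≤ sig (p ^ e * m) + 1 := by
      have h1 : (p - 1) * sig (p ^ e) + 1 = p ^ (e + 1) := by
        rw [sig_prime_pow hp]; exact geom_eq hp.one_le e
      have h2 : (p - 1) * sig (p ^ e) ≤ sig m * sig (p ^ e) :=
        Nat.mul_le_mul_right _ (by omega)
      have h3 : sig m * sig (p ^ e) = sig (p ^ e) * sig m := Nat.mul_comm _ _
      rw [hsig1]
      omega
    refine ⟨hpos2, fun m' hm' => ?_⟩
    have hsub12 : (p ^ e * m).divisors ⊆ (p ^ (e + 1) * m).divisors :=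
      Nat.divisors_subset_of_dvd hpos2.ne'
        (Nat.mul_dvd_mul_right (pow_dvd_pow p (Nat.le_succ e)) m)
    by_cases hc : m' ≤ sig (p ^ e * m)
    · obtain ⟨A, hA, hAs⟩ := IH.2 m' hc
      exact ⟨A, hA.trans hsub12, hAs⟩
    · push_neg at hc
      have hub : m' ≤ sig (p ^ e * m) + p ^ (e + 1) * sig m := by omega
      set t := (m' - sig (p ^ e * m) + p ^ (e + 1) - 1) / p ^ (e + 1) with htdef
      obtain ⟨r0, hr0lt, hr0⟩ : ∃ r0, r0 < p ^ (e + 1) ∧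
          p ^ (e + 1) * t + r0 = m' - sig (p ^ e * m) + p ^ (e + 1) - 1 := by
        refine ⟨(m' - sig (p ^ e * m) + p ^ (e + 1) - 1) % p ^ (e + 1),
          Nat.mod_lt _ hPpos, ?_⟩
        rw [htdef]; exact Nat.div_add_mod _ _
      have hta : m' - sig (p ^ e * m) ≤ p ^ (e + 1) * t := by omega
      have htm : p ^ (e + 1) * t ≤ m' := by omega
      have ht1 : t ≤ sig m := by
        by_contra hcon
        push_neg at hcon
        have h5 : p ^ (e + 1) * (sig m + 1) ≤ p ^ (e + 1) * t := Nat.mul_le_mul_left _ hcon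
        rw [Nat.mul_add, Nat.mul_one] at h5
        omega
      have hr : m' - p ^ (e + 1) * t ≤ sig (p ^ e * m) := by omega
      obtain ⟨B, hB, hBs⟩ := hm.2 t ht1
      obtain ⟨C, hC, hCs⟩ := IH.2 (m' - p ^ (e + 1) * t) hr
      refine ⟨C ∪ B.image (fun b => p ^ (e + 1) * b), ?_, ?_⟩
      · intro x hx
        rcases Finset.mem_union.mp hx with h | h
        · exact hsub12 (hC h)
        · obtain ⟨b, hb, rfl⟩ := Finset.mem_image.mp h
          have hbd : b ∣ m := (Nat.mem_divisors.mp (hB hb)).1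
          exact Nat.mem_divisors.mpr ⟨Nat.mul_dvd_mul dvd_rfl hbd, hpos2.ne'⟩
      · have hdisj : Disjoint C (B.image (fun b => p ^ (e + 1) * b)) := by
          rw [Finset.disjoint_left]
          intro x hxC hxI
          obtain ⟨b, hb, rfl⟩ := Finset.mem_image.mp hxI
          have hxd : p ^ (e + 1) * b ∣ p ^ e * m := (Nat.mem_divisors.mp (hC hxC)).1
          have hPd : p ^ (e + 1) ∣ p ^ e * m := (dvd_mul_right _ b).trans hxd
          have h6 : p ^ e * p ∣ p ^ e * m := by rwa [← pow_succ]
          exact hpm ((Nat.mul_dvd_mul_iff_left (Nat.pow_pos hppos : 0 < p ^ e)).mp h6)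
        rw [Finset.sum_union hdisj, hCs,
          Finset.sum_image (fun x _ y _ h => Nat.eq_of_mul_eq_mul_left hPpos h),
          ← Finset.mul_sum, hBs]
        omega

lemma two_pow_half (n : ℕ) : n - 1 ≤ 2 ^ (n / 2) := by
  have key : ∀ k : ℕ, 1 ≤ k → 2 * k ≤ 2 ^ k := by
    intro k hk
    induction k with
    | zero => omega
    | succ k ih =>
      rcases Nat.eq_or_lt_of_le hk with h | h
      · simp [← h]
      · have hk1 : 1 ≤ k := by omega
        have h2 : 2 ≤ 2 ^ k := by
          calc (2:ℕ) = 2 ^ 1 := by norm_num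
            _ ≤ 2 ^ k := Nat.pow_le_pow_right (by norm_num) hk1
        have := ih hk1
        rw [pow_succ]
        omega
  by_cases h : 1 ≤ n / 2
  · have := key (n / 2) h
    omega
  · have : (1:ℕ) ≤ 2 ^ (n / 2) := Nat.one_le_two_pow
    omega

open Nat in
lemma half_le_fact_factorization (n : ℕ) (hn : 1 ≤ n) : n / 2 ≤ (n !).factorization 2 := by
  have hp : Nat.Prime 2 := Nat.prime_two
  have hb : Nat.log 2 n < Nat.log 2 n + 2 := by omega
  have hdvd : 2 ^ (n / 2) ∣ n ! := by
    rw [Nat.Prime.pow_dvd_factorial_iff hp hb]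
    have h1 : (1 : ℕ) ∈ Finset.Ico 1 (Nat.log 2 n + 2) := Finset.mem_Ico.mpr ⟨le_refl 1, by omega⟩
    calc n / 2 = n / 2 ^ 1 := by norm_num
      _ ≤ ∑ i ∈ Finset.Ico 1 (Nat.log 2 n + 2), n / 2 ^ i :=
        Finset.single_le_sum (f := fun i => n / 2 ^ i) (fun i _ => Nat.zero_le _) h1
  exact (Nat.Prime.pow_dvd_iff_le_factorization hp (Nat.factorial_ne_zero n)).mp hdvd

open Nat in
lemma complete_factorial (n : ℕ) (hn : 3 ≤ n) : Complete (n !) := by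
  set f := (n !).factorization with hf
  have hfact0 : n ! ≠ 0 := Nat.factorial_ne_zero n
  have h2n : n / 2 ≤ f 2 := half_le_fact_factorization n (by omega)
  have hbound : n - 1 ≤ 2 ^ f 2 :=
    le_trans (two_pow_half n) (Nat.pow_le_pow_right (by norm_num) h2n)
  have key : ∀ s : Finset ℕ, (∀ p ∈ s, p.Prime ∧ p ≤ n ∧ p ≠ 2) →
      Complete (2 ^ f 2 * ∏ p ∈ s, p ^ f p) := by
    intro s
    induction s using Finset.induction with
    | empty =>
      intro _
      simpa using Complete.mul_prime_pow complete_one Nat.prime_two (by norm_num)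
        (by simp [sig]) (f 2)
    | @insert p s hps ih =>
      intro hmem
      obtain ⟨hp, hpn, hp2⟩ := hmem p (Finset.mem_insert_self p s)
      have ihs := ih (fun q hq => hmem q (Finset.mem_insert_of_mem hq))
      have hm0pos : 0 < 2 ^ f 2 * ∏ q ∈ s, q ^ f q := ihs.1
      have hpm0 : ¬ p ∣ 2 ^ f 2 * ∏ q ∈ s, q ^ f q := by
        intro hdvd
        rcases (Nat.Prime.dvd_mul hp).mp hdvd with h | h
        · exact hp2 ((Nat.prime_dvd_prime_iff_eq hp Nat.prime_two).mp
            (hp.dvd_of_dvd_pow h))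
        · obtain ⟨q, hq, hpq⟩ := (Prime.dvd_finset_prod_iff hp.prime _).mp h
          have hqprime := (hmem q (Finset.mem_insert_of_mem hq)).1
          have : p = q := (Nat.prime_dvd_prime_iff_eq hp hqprime).mp (hp.dvd_of_dvd_pow hpq)
          exact hps (this ▸ hq)
      have hple : p ≤ sig (2 ^ f 2 * ∏ q ∈ s, q ^ f q) + 1 := by
        have h1 : 2 ^ f 2 ≤ 2 ^ f 2 * ∏ q ∈ s, q ^ f q := by
          have hpr : 0 < ∏ q ∈ s, q ^ f q := by
            apply Finset.prod_pos
            intro q hq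
            exact Nat.pow_pos (hmem q (Finset.mem_insert_of_mem hq)).1.pos
          calc 2 ^ f 2 = 2 ^ f 2 * 1 := by ring
            _ ≤ 2 ^ f 2 * ∏ q ∈ s, q ^ f q := Nat.mul_le_mul_left _ hpr
        have h2 := le_sig hm0pos
        omega
      have hstep := Complete.mul_prime_pow ihs hp hpm0 hple (f p)
      rw [Finset.prod_insert hps]
      have heq : 2 ^ f 2 * (p ^ f p * ∏ q ∈ s, q ^ f q)
          = p ^ f p * (2 ^ f 2 * ∏ q ∈ s, q ^ f q) := by ring
      rw [heq]
      exact hstep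
  have h2mem : 2 ∈ f.support := by
    rw [Finsupp.mem_support_iff]
    omega
  have hmain := key (f.support.erase 2) (fun p hp => by
    have hpsup : p ∈ f.support := Finset.mem_of_mem_erase hp
    have hsupp : p ∈ (n !).primeFactors := by
      rwa [hf, Nat.support_factorization] at hpsup
    have hprime : p.Prime := Nat.prime_of_mem_primeFactors hsupp
    refine ⟨hprime, ?_, Finset.ne_of_mem_erase hp⟩
    have hpd : p ∣ n ! := Nat.dvd_of_mem_primeFactors hsupp
    exact (Nat.Prime.dvd_factorial hprime).mp hpd)
  have hfacteq : n ! = 2 ^ f 2 * ∏ p ∈ f.support.erase 2, p ^ f p := by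
    conv_lhs => rw [← Nat.factorization_prod_pow_eq_self hfact0]
    rw [Finsupp.prod, ← hf, ← Finset.mul_prod_erase _ _ h2mem]
  rwa [hfacteq]

open Nat in
lemma sig_factorial_even (n : ℕ) (hn : 6 ≤ n) : 2 ∣ sig (n !) := by
  obtain ⟨p, pp, hlt, hle⟩ := Nat.exists_prime_lt_and_le_two_mul (n / 2) (by omega)
  have hpn : p ≤ n := le_trans hle (by omega)
  have h2p : n < 2 * p := by omega
  have hp4 : 4 ≤ p := by omega
  have hpsq : n < p ^ 2 := by
    have h1 : 4 * p ≤ p * p := Nat.mul_le_mul_right p hp4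
    have h2 : p ^ 2 = p * p := sq p
    omega
  have hpd : p ∣ n ! := Nat.dvd_factorial pp.pos hpn
  have hdiv1 : n / p = 1 := Nat.div_eq_of_lt_le (by omega) (by omega)
  have hnd : ¬ p ^ 2 ∣ n ! := by
    rw [Nat.Prime.pow_dvd_factorial_iff pp (Nat.log_lt_of_lt_pow (by omega) hpsq)]
    have hIco : Finset.Ico 1 2 = {1} := rfl
    rw [hIco, Finset.sum_singleton, pow_one, hdiv1]
    omega
  have hfq : n ! = p * (n ! / p) := (Nat.mul_div_cancel' hpd).symm
  have hpq : ¬ p ∣ (n ! / p) := by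
    intro h
    apply hnd
    rw [hfq, sq]
    exact Nat.mul_dvd_mul dvd_rfl h
  have hcop : Nat.Coprime p (n ! / p) := (Nat.Prime.coprime_iff_not_dvd pp).mpr hpq
  have hmul : sig (n !) = sig p * sig (n ! / p) := by
    conv_lhs => rw [hfq]
    exact Nat.Coprime.sum_divisors_mul hcop
  have hsigp : sig p = 1 + p := by
    rw [sig, Nat.Prime.divisors pp, Finset.sum_pair pp.one_lt.ne]
  have hodd : p % 2 = 1 := Nat.odd_iff.mp (pp.odd_of_ne_two (by omega))
  rw [hmul, hsigp]
  exact Dvd.dvd.mul_right (by omega) _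

open Nat in
theorem stmt14 (n : ℕ) (hn : 3 ≤ n) : Zumkeller (n !) := by
  by_cases h6 : n < 6
  · interval_cases n
    · exact ⟨by norm_num [Nat.factorial], ⟨{1,2,3}, by decide, by decide⟩⟩
    · exact ⟨by norm_num [Nat.factorial], ⟨{6,24}, by decide, by decide⟩⟩
    · exact ⟨by norm_num [Nat.factorial], ⟨{60,120}, by decide, by decide⟩⟩
  · push_neg at h6
    have hC := complete_factorial n hn
    have heven := sig_factorial_even n h6
    obtain ⟨A, hA, hAs⟩ := hC.2 (sig (n !) / 2) (Nat.div_le_self _ _)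
    refine ⟨Nat.factorial_pos n, A, hA, ?_⟩
    have hsd : ∑ d ∈ (n !).divisors \ A, d + ∑ d ∈ A, d = ∑ d ∈ (n !).divisors, d :=
      Finset.sum_sdiff hA
    have hss : (∑ d ∈ (n !).divisors, d) = sig (n !) := rfl
    omega
end

section
/- Let n be an odd Zumkeller number. Then the product over the distinct prime divisors p of n of p/(p−1) is at least 2, and n has at least 3 distinct prime divisors. -/
open Finset ArithmeticFunction
open scoped ArithmeticFunction.sigma

lemma zum_sigma {n : ℕ} (hz : Zumkeller n) : 2 * n ≤ ∑ d ∈ n.divisors, d := by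
  obtain ⟨hn, A, hA, hsum⟩ := hz
  have htot : ∑ d ∈ n.divisors \ A, d + ∑ d ∈ A, d = ∑ d ∈ n.divisors, d :=
    Finset.sum_sdiff hA
  have hmem : n ∈ n.divisors := Nat.mem_divisors_self n hn.ne'
  by_cases h : n ∈ A
  · have : n ≤ ∑ d ∈ A, d := Finset.single_le_sum (fun i _ => Nat.zero_le i) h
    omega
  · have : n ≤ ∑ d ∈ n.divisors \ A, d :=
      Finset.single_le_sum (fun i _ => Nat.zero_le i) (Finset.mem_sdiff.mpr ⟨hmem, h⟩)
    omega

lemma sigma_le_prod {n : ℕ} (hn : n ≠ 0) :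
    ((∑ d ∈ n.divisors, d : ℕ) : ℚ) ≤ (n : ℚ) * ∏ p ∈ n.primeFactors, (p : ℚ) / (p - 1) := by
  have hσ : (σ 1) n = n.factorization.prod fun p k => (σ 1) (p ^ k) :=
    isMultiplicative_sigma.multiplicative_factorization _ hn
  have hn' : n = n.factorization.prod fun p k => p ^ k :=
    (Nat.factorization_prod_pow_eq_self hn).symm
  have hs : n.factorization.support = n.primeFactors := Nat.support_factorization n
  have hneq : (n : ℚ) = ∏ x ∈ n.primeFactors, (x : ℚ) ^ n.factorization x := by
    conv_lhs => rw [hn']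
    rw [Finsupp.prod, hs]
    push_cast
    rfl
  rw [← sigma_one_apply, hσ, Finsupp.prod, hs, hneq]
  push_cast
  rw [← Finset.prod_mul_distrib]
  apply Finset.prod_le_prod
  · intro p hp; positivity
  · intro p hp
    have hp' : p.Prime := Nat.prime_of_mem_primeFactors hp
    have hp2 : (2:ℚ) ≤ p := by exact_mod_cast hp'.two_le
    have hp1 : (0:ℚ) < (p:ℚ) - 1 := by linarith
    set k := n.factorization p
    have hgs : ((σ 1) (p ^ k) : ℚ) = ∑ i ∈ range (k+1), (p:ℚ) ^ i := by
      rw [sigma_one_apply, Nat.sum_divisors_prime_pow hp']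
      push_cast; ring_nf
    rw [hgs, mul_div_assoc', le_div_iff₀ hp1]
    calc (∑ i ∈ range (k+1), (p:ℚ) ^ i) * ((p:ℚ) - 1) = (p:ℚ)^(k+1) - 1 := geom_sum_mul _ _
      _ ≤ (p:ℚ)^(k+1) := by linarith
      _ = (p:ℚ)^k * p := by ring

theorem stmt15 (n : ℕ) (hodd : Odd n) (hz : Zumkeller n) :
    (2 ≤ ∏ p ∈ n.primeFactors, (p : ℚ) / (p - 1)) ∧ 3 ≤ n.primeFactors.card := by
  have hn0 : n ≠ 0 := hz.1.ne'
  have hnQ : (0:ℚ) < n := by exact_mod_cast hz.1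
  have h1 : 2 ≤ ∏ p ∈ n.primeFactors, (p : ℚ) / (p - 1) := by
    have hσQ : 2 * (n:ℚ) ≤ ((∑ d ∈ n.divisors, d : ℕ) : ℚ) := by exact_mod_cast zum_sigma hz
    have h2n : 2 * (n:ℚ) ≤ (n:ℚ) * ∏ p ∈ n.primeFactors, (p : ℚ) / (p - 1) :=
      le_trans hσQ (sigma_le_prod hn0)
    have h2n' : (n:ℚ) * 2 ≤ (n:ℚ) * ∏ p ∈ n.primeFactors, (p : ℚ) / (p - 1) := by linarith
    exact le_of_mul_le_mul_left h2n' hnQ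
  refine ⟨h1, ?_⟩
  have hp3 : ∀ p ∈ n.primeFactors, 3 ≤ p ∧ p % 2 = 1 := by
    intro p hp
    have hp' : p.Prime := Nat.prime_of_mem_primeFactors hp
    have hdvd : p ∣ n := Nat.dvd_of_mem_primeFactors hp
    have hne : p ≠ 2 := by
      rintro rfl
      exact (Nat.not_even_iff_odd.mpr hodd) (even_iff_two_dvd.mpr hdvd)
    have h2 := hp'.two_le
    have := Nat.odd_iff.mp (hp'.odd_of_ne_two hne)
    exact ⟨by omega, this⟩
  by_contra hcard
  push_neg at hcard
  interval_cases h : n.primeFactors.card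
  · rw [Finset.card_eq_zero] at h
    rw [h, Finset.prod_empty] at h1
    norm_num at h1
  · obtain ⟨p, hP⟩ := Finset.card_eq_one.mp h
    have hpm : p ∈ n.primeFactors := hP ▸ Finset.mem_singleton_self p
    rw [hP, Finset.prod_singleton] at h1
    have h3 : (3:ℚ) ≤ p := by exact_mod_cast (hp3 p hpm).1
    rw [le_div_iff₀ (by linarith)] at h1
    linarith
  · obtain ⟨p, q, hpq, hP⟩ := Finset.card_eq_two.mp h
    have hpm : p ∈ n.primeFactors := by rw [hP]; simp
    have hqm : q ∈ n.primeFactors := by rw [hP]; simp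
    rw [hP, Finset.prod_pair hpq] at h1
    obtain ⟨hp3', hpo⟩ := hp3 p hpm
    obtain ⟨hq3', hqo⟩ := hp3 q hqm
    have hpQ : (3:ℚ) ≤ p := by exact_mod_cast hp3'
    have hqQ : (3:ℚ) ≤ q := by exact_mod_cast hq3'
    rw [div_mul_div_comm, le_div_iff₀ (by nlinarith)] at h1
    have hd : p + 2 ≤ q ∨ q + 2 ≤ p := by omega
    rcases hd with hd | hd
    · have hdQ : (p:ℚ) + 2 ≤ q := by exact_mod_cast hd
      nlinarith [mul_nonneg (by linarith : (0:ℚ) ≤ (p:ℚ) - 3) (by linarith : (0:ℚ) ≤ (q:ℚ) - 5)]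
    · have hdQ : (q:ℚ) + 2 ≤ p := by exact_mod_cast hd
      nlinarith [mul_nonneg (by linarith : (0:ℚ) ≤ (q:ℚ) - 3) (by linarith : (0:ℚ) ≤ (p:ℚ) - 5)]
end

section
/- If n is an odd half-Zumkeller number, then n is a perfect square. -/
theorem stmt16 (n : ℕ) (hodd : Odd n) (hh : HalfZumkeller n) : IsSquare n := by
  obtain ⟨hn, A, hA, hsum⟩ := hh
  have hn0 : n ≠ 0 := hn.ne'
  -- proper divisor sum is even
  have hps : ∑ d ∈ n.properDivisors, d = 2 * ∑ d ∈ A, d := by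
    rw [← Finset.sum_sdiff hA, ← hsum, two_mul]
  -- σ(n) is odd
  have hσ : Odd (∑ d ∈ n.divisors, d) := by
    rw [Nat.sum_divisors_eq_sum_properDivisors_add_self, hps]
    exact (even_two_mul _).add_odd hodd
  -- every divisor is odd
  have hdo : ∀ d ∈ n.divisors, Odd d := by
    intro d hd
    rw [← Nat.not_even_iff_odd]
    intro he
    have : 2 ∣ n := dvd_trans (even_iff_two_dvd.mp he) (Nat.dvd_of_mem_divisors hd)
    exact (Nat.not_even_iff_odd.mpr hodd) (even_iff_two_dvd.mpr this)
  -- card divisors is odd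
  have hcard : Odd n.divisors.card := by
    rw [Finset.odd_sum_iff_odd_card_odd] at hσ
    rwa [Finset.filter_true_of_mem hdo] at hσ
  rw [Nat.card_divisors hn0] at hcard
  have hev : ∀ p ∈ n.primeFactors, Even (n.factorization p) := by
    intro p hp
    rcases Nat.even_or_odd (n.factorization p) with he | ho
    · exact he
    · exfalso
      have h2 : 2 ∣ n.factorization p + 1 := (Nat.even_add_one.mpr (Nat.not_even_iff_odd.mpr ho)).two_dvd
      have hdvd : (n.factorization p + 1) ∣ n.primeFactors.prod (n.factorization · + 1) :=
        Finset.dvd_prod_of_mem _ hp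
      exact (Nat.not_even_iff_odd.mpr hcard) ((h2.trans hdvd).elim fun c hc => ⟨c, by omega⟩)
  rw [← Nat.factorization_prod_pow_eq_self hn0]
  exact Finset.isSquare_prod _ fun p hp => by
    obtain ⟨k, hk⟩ := hev p hp
    exact ⟨p ^ k, by rw [hk, ← pow_add]⟩
end

section
/- If n is an even half-Zumkeller number, then n is a Zumkeller number. -/
theorem stmt17 (n : ℕ) (heven : Even n) (hh : HalfZumkeller n) : Zumkeller n := by
  obtain ⟨hn, A, hA, hsum⟩ := hh
  have h2 : 2 ∣ n := heven.two_dvd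
  have hhalf : n / 2 ∈ n.properDivisors := by
    rw [Nat.mem_properDivisors]
    exact ⟨Nat.div_dvd_of_dvd h2, Nat.div_lt_self hn one_lt_two⟩
  have hnP : n ∉ n.properDivisors := by
    simp [Nat.mem_properDivisors]
  have hne : n / 2 ≠ n := by omega
  have key : ∀ B ⊆ n.properDivisors, ∑ d ∈ B, d = ∑ d ∈ n.properDivisors \ B, d →
      n / 2 ∈ B → Zumkeller n := by
    intro B hB hs hmem
    refine ⟨hn, insert n (B.erase (n / 2)), ?_, ?_⟩
    · intro x hx
      rcases Finset.mem_insert.mp hx with rfl | hx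
      · exact Nat.mem_divisors_self _ hn.ne'
      · have hx' := hB (Finset.erase_subset _ _ hx)
        exact Nat.mem_divisors.mpr ⟨(Nat.mem_properDivisors.mp hx').1, hn.ne'⟩
    · have hsdiff : n.divisors \ insert n (B.erase (n / 2)) =
          insert (n / 2) (n.properDivisors \ B) := by
        rw [← Nat.insert_self_properDivisors hn.ne']
        ext x
        simp only [Finset.mem_sdiff, Finset.mem_insert, Finset.mem_erase]
        have h5 : x = n / 2 → x ∈ B := fun h => h ▸ hmem
        have h6 : x = n → x ∉ n.properDivisors := fun h => h ▸ hnP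
        have h7 : x = n / 2 → x ∈ n.properDivisors := fun h => h ▸ hhalf
        have h8 : x = n / 2 → x ≠ n := fun h => h ▸ hne
        have hBx : x ∈ B → x ∈ n.properDivisors := fun h => hB h
        tauto
      rw [hsdiff]
      have h1 : n ∉ B.erase (n / 2) := fun h =>
        hnP (hB (Finset.erase_subset _ _ h))
      have h2' : n / 2 ∉ n.properDivisors \ B := fun h =>
        (Finset.mem_sdiff.mp h).2 hmem
      rw [Finset.sum_insert h1, Finset.sum_insert h2']
      have h3 : n / 2 + ∑ d ∈ B.erase (n / 2), d = ∑ d ∈ B, d :=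
        Finset.add_sum_erase B (fun d => d) hmem
      have h4 : n / 2 + n / 2 = n := by omega
      omega
  by_cases hmem : n / 2 ∈ A
  · exact key A hA hsum hmem
  · refine key (n.properDivisors \ A) (Finset.sdiff_subset) ?_
      (Finset.mem_sdiff.mpr ⟨hhalf, hmem⟩)
    rw [Finset.sdiff_sdiff_eq_self hA]
    exact hsum.symm
end

section
/- If n is an even Zumkeller number with σ(n) < 3n, then n is a half-Zumkeller number. -/
lemma aux18 (n : ℕ) (hn : 0 < n) (heven : Even n) (A : Finset ℕ)
    (hA : A ⊆ n.divisors) (hnA : n ∈ A)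
    (hsum : ∑ d ∈ A, d = ∑ d ∈ n.divisors \ A, d)
    (hsigma : (∑ d ∈ n.divisors, d) < 3 * n) : HalfZumkeller n := by
  obtain ⟨k, hk⟩ := heven
  have hk2 : n = 2 * k := by omega
  have hkpos : 0 < k := by omega
  have hkdvd : k ∣ n := ⟨2, by omega⟩
  have hkdiv : k ∈ n.divisors := Nat.mem_divisors.2 ⟨hkdvd, hn.ne'⟩
  have hklt : k < n := by omega
  have htot : ∑ d ∈ n.divisors \ A, d + ∑ d ∈ A, d = ∑ d ∈ n.divisors, d :=
    Finset.sum_sdiff hA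
  -- k ∉ A
  have hkA : k ∉ A := by
    intro hkin
    have hpair : ({n, k} : Finset ℕ) ⊆ A := by
      intro x hx
      simp only [Finset.mem_insert, Finset.mem_singleton] at hx
      rcases hx with rfl | rfl <;> assumption
    have hge : n + k ≤ ∑ d ∈ A, d := by
      have := Finset.sum_le_sum_of_subset (f := fun d => d) hpair
      rwa [Finset.sum_pair (by omega : n ≠ k)] at this
    omega
  refine ⟨hn, insert k (A.erase n), ?_, ?_⟩
  · intro x hx
    rcases Finset.mem_insert.1 hx with rfl | hx
    · exact Nat.mem_properDivisors.2 ⟨hkdvd, hklt⟩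
    · have hxA := Finset.mem_of_mem_erase hx
      have hxn := Finset.ne_of_mem_erase hx
      have := Nat.mem_divisors.1 (hA hxA)
      exact Nat.mem_properDivisors.2 ⟨this.1, lt_of_le_of_ne (Nat.le_of_dvd hn this.1) hxn⟩
  · have hcompl : n.properDivisors \ insert k (A.erase n) = (n.divisors \ A).erase k := by
      ext d
      simp only [Finset.mem_sdiff, Nat.mem_properDivisors, Finset.mem_insert,
        Finset.mem_erase, Nat.mem_divisors]
      constructor
      · rintro ⟨⟨hd, hdn⟩, h2⟩
        push_neg at h2
        exact ⟨h2.1, ⟨hd, hn.ne'⟩, h2.2 hdn.ne⟩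
      · rintro ⟨hdk, ⟨hd, _⟩, hdA⟩
        have hdn : d ≠ n := fun h => hdA (h ▸ hnA)
        exact ⟨⟨hd, lt_of_le_of_ne (Nat.le_of_dvd hn hd) hdn⟩, by
          push_neg
          exact ⟨hdk, fun _ => hdA⟩⟩
    rw [hcompl]
    have hkerase : k ∉ A.erase n := fun h => hkA (Finset.mem_of_mem_erase h)
    rw [Finset.sum_insert hkerase]
    have h1 : ∑ d ∈ A, d = n + ∑ d ∈ A.erase n, d := (Finset.add_sum_erase _ _ hnA).symm
    have hkB : k ∈ n.divisors \ A := Finset.mem_sdiff.2 ⟨hkdiv, hkA⟩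
    have h2 : ∑ d ∈ n.divisors \ A, d = k + ∑ d ∈ (n.divisors \ A).erase k, d :=
      (Finset.add_sum_erase _ _ hkB).symm
    omega

theorem stmt18 (n : ℕ) (heven : Even n) (hz : Zumkeller n)
    (hsigma : (∑ d ∈ n.divisors, d) < 3 * n) : HalfZumkeller n := by
  obtain ⟨hn, A, hA, hsum⟩ := hz
  have hndiv : n ∈ n.divisors := Nat.mem_divisors_self n hn.ne'
  by_cases hnA : n ∈ A
  · exact aux18 n hn heven A hA hnA hsum hsigma
  · have hnB : n ∈ n.divisors \ A := Finset.mem_sdiff.2 ⟨hndiv, hnA⟩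
    have hBB : n.divisors \ (n.divisors \ A) = A := Finset.sdiff_sdiff_eq_self hA
    exact aux18 n hn heven (n.divisors \ A) (Finset.sdiff_subset) hnB
      (by rw [hBB]; exact hsum.symm) hsigma
end

section
/- If n is a Zumkeller number, then 2n is a half-Zumkeller number. -/
lemma two_divisors (n : ℕ) (hn : 0 < n) :
    (2*n).divisors = n.divisors ∪ (n.divisors.filter (fun d => ¬ (2*d ∣ n))).image (2 * ·) := by
  ext d
  simp only [Finset.mem_union, Finset.mem_image, Finset.mem_filter, Nat.mem_divisors]
  constructor
  · rintro ⟨hd, -⟩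
    by_cases h : d ∣ n
    · exact Or.inl ⟨h, hn.ne'⟩
    · right
      have hde : 2 ∣ d := by
        rcases Nat.even_or_odd d with he | ho
        · exact he.two_dvd
        · exact absurd (((Nat.coprime_two_right).mpr ho).dvd_of_dvd_mul_left hd) h
      obtain ⟨e, rfl⟩ := hde
      refine ⟨e, ⟨⟨(mul_dvd_mul_iff_left (two_ne_zero)).mp hd, hn.ne'⟩, h⟩, rfl⟩
  · rintro (⟨h, -⟩ | ⟨e, ⟨⟨he, -⟩, -⟩, rfl⟩)
    · exact ⟨h.mul_left 2, by positivity⟩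
    · exact ⟨mul_dvd_mul_left 2 he, by positivity⟩

lemma aux19 (n : ℕ) (hn : 0 < n) (A : Finset ℕ) (hA : A ⊆ n.divisors)
    (hnA : n ∈ A) (hsum : ∑ d ∈ A, d = ∑ d ∈ n.divisors \ A, d) :
    HalfZumkeller (2 * n) := by
  classical
  set H : Finset ℕ := n.divisors.filter (fun d => ¬ (2*d ∣ n)) with hHdef
  have hHsub : H ⊆ n.divisors := Finset.filter_subset _ _
  have hnH : n ∈ H := by
    refine Finset.mem_filter.mpr ⟨Nat.mem_divisors_self n hn.ne', ?_⟩
    intro h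
    have := Nat.le_of_dvd hn h
    omega
  have hdec := two_divisors n hn
  rw [← hHdef] at hdec
  -- disjointness of divisors n and the image
  have hdisj : Disjoint n.divisors (H.image (2 * ·)) := by
    rw [Finset.disjoint_right]
    rintro d hd hd'
    obtain ⟨e, he, rfl⟩ := Finset.mem_image.mp hd
    exact (Finset.mem_filter.mp he).2 (Nat.mem_divisors.mp hd').1
  set P : Finset ℕ := (A \ H) ∪ (H \ A) ∪ (A ∩ H).image (2 * ·) with hPdef
  have hPsub : P ⊆ (2*n).divisors := by
    rw [hdec]
    refine Finset.union_subset (Finset.union_subset ?_ ?_) ?_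
    · exact ((Finset.sdiff_subset).trans hA).trans Finset.subset_union_left
    · exact ((Finset.sdiff_subset).trans hHsub).trans Finset.subset_union_left
    · exact (Finset.image_subset_image (Finset.inter_subset_right)).trans
        Finset.subset_union_right
  have h2nP : 2 * n ∈ P := by
    refine Finset.mem_union_right _ (Finset.mem_image.mpr ⟨n, ?_, rfl⟩)
    exact Finset.mem_inter.mpr ⟨hnA, hnH⟩
  have hnP : n ∉ P := by
    intro h
    rcases Finset.mem_union.mp h with h | h
    · rcases Finset.mem_union.mp h with h | h
      · exact (Finset.mem_sdiff.mp h).2 hnH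
      · exact (Finset.mem_sdiff.mp h).2 hnA
    · obtain ⟨e, he, hee⟩ := Finset.mem_image.mp h
      have := (Finset.mem_filter.mp (Finset.mem_inter.mp he).2).2
      exact this (hee ▸ dvd_refl n)
  set S : Finset ℕ := insert n (P.erase (2*n)) with hSdef
  have hSsub : S ⊆ (2*n).properDivisors := by
    intro x hx
    rcases Finset.mem_insert.mp hx with h | hx
    · rw [h]; exact Nat.mem_properDivisors.mpr ⟨dvd_mul_left n 2, by omega⟩
    · have hx2 := Finset.mem_erase.mp hx
      have hxd := Nat.mem_divisors.mp (hPsub hx2.2)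
      refine Nat.mem_properDivisors.mpr ⟨hxd.1, ?_⟩
      have := Nat.le_of_dvd (by omega) hxd.1
      omega
  refine ⟨by omega, S, hSsub, ?_⟩
  -- sum computations
  have e1 : ∑ d ∈ n.divisors \ A, d + ∑ d ∈ A, d = ∑ d ∈ n.divisors, d :=
    Finset.sum_sdiff hA
  have eimg : ∑ d ∈ H.image (2 * ·), d = 2 * ∑ d ∈ H, d := by
    rw [Finset.sum_image (by intro x _ y _ h; simp only at h; omega), Finset.mul_sum]
  have eimg2 : ∑ d ∈ (A ∩ H).image (2 * ·), d = 2 * ∑ d ∈ A ∩ H, d := by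
    rw [Finset.sum_image (by intro x _ y _ h; simp only at h; omega), Finset.mul_sum]
  have e2 : ∑ d ∈ (2*n).divisors, d = ∑ d ∈ n.divisors, d + 2 * ∑ d ∈ H, d := by
    rw [hdec, Finset.sum_union hdisj, eimg]
  have e3 : ∑ d ∈ A ∩ H, d + ∑ d ∈ A \ H, d = ∑ d ∈ A, d :=
    Finset.sum_inter_add_sum_sdiff A H _
  have e3' : ∑ d ∈ H ∩ A, d + ∑ d ∈ H \ A, d = ∑ d ∈ H, d :=
    Finset.sum_inter_add_sum_sdiff H A _
  have einter : ∑ d ∈ H ∩ A, d = ∑ d ∈ A ∩ H, d := by rw [Finset.inter_comm]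
  have hdisj1 : Disjoint (A \ H) (H \ A) := by
    rw [Finset.disjoint_left]; intro x hx hx'
    exact (Finset.mem_sdiff.mp hx).2 (Finset.mem_sdiff.mp hx').1
  have hdisj2 : Disjoint ((A \ H) ∪ (H \ A)) ((A ∩ H).image (2 * ·)) := by
    refine Finset.disjoint_of_subset_left ?_ (Finset.disjoint_of_subset_right
      (Finset.image_subset_image Finset.inter_subset_right) hdisj)
    exact Finset.union_subset ((Finset.sdiff_subset).trans hA)
      ((Finset.sdiff_subset).trans hHsub)
  have e4 : ∑ d ∈ P, d
      = ∑ d ∈ A \ H, d + ∑ d ∈ H \ A, d + 2 * ∑ d ∈ A ∩ H, d := by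
    rw [hPdef, Finset.sum_union hdisj2, Finset.sum_union hdisj1, eimg2]
  have e5 : 2 * n + ∑ d ∈ P.erase (2*n), d = ∑ d ∈ P, d :=
    Finset.add_sum_erase P (fun d => d) h2nP
  have e6 : ∑ d ∈ S, d = n + ∑ d ∈ P.erase (2*n), d := by
    rw [hSdef, Finset.sum_insert (fun h => hnP (Finset.mem_of_mem_erase h))]
  have e7 : ∑ d ∈ (2*n).properDivisors \ S, d + ∑ d ∈ S, d
      = ∑ d ∈ (2*n).properDivisors, d := Finset.sum_sdiff hSsub
  have e8 : ∑ d ∈ (2*n).divisors, d = ∑ d ∈ (2*n).properDivisors, d + 2*n :=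
    (Nat.sum_divisors_eq_sum_properDivisors_add_self).symm ▸ rfl
  omega


theorem stmt19 (n : ℕ) (hz : Zumkeller n) : HalfZumkeller (2 * n) := by
  obtain ⟨hn, A, hA, hsum⟩ := hz
  by_cases hnA : n ∈ A
  · exact aux19 n hn A hA hnA hsum
  · refine aux19 n hn (n.divisors \ A) Finset.sdiff_subset ?_ ?_
    · exact Finset.mem_sdiff.mpr ⟨Nat.mem_divisors_self n hn.ne', hnA⟩
    · rw [Finset.sdiff_sdiff_eq_self hA]
      exact hsum.symm
end
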